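/- arXiv:2411.05096 — 6 statements merged into one kernel-verified Lean document; each statement's English description precedes it below -/
import Mathlib

section
/- Let T be a linear operator on F_q^n of similarity class type {(d_1,λ^1),…,(d_r,λ^r)}. Then the number of 1-dimensional T-invariant subspaces of F_q^n equals the sum over all indices i with d_i=1 of [ℓ(λ^i)]_q, where ℓ(λ^i) is the number of parts of λ^i and [m]_q = 1+q+⋯+q^{m-1}. -/
open Polynomial Finset



/-- The q-analog `[m]_q = 1 + q + ⋯ + q^(m-1)`. -/
def qInt (q m : ℕ) : ℕ := ∑ j ∈ Finset.range m, q ^ j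

/-- The q-factorial `[k]_q! = ∏_{j=1}^k [j]_q`. -/
def qFact (q k : ℕ) : ℕ := ∏ j ∈ Finset.range k, qInt q (j + 1)

/-- A complete flag `0 = V 0 ⊆ V 1 ⊆ ⋯ ⊆ V n = F^n` with `dim (V i) = i`. -/
def IsFlag (F : Type) [Field F] (n : ℕ) (V : ℕ → Submodule F (Fin n → F)) : Prop :=
  V 0 = ⊥ ∧ V n = ⊤ ∧ (∀ i, V i ≤ V (i + 1)) ∧ ∀ i, i ≤ n → Module.finrank F ↥(V i) = i

/-- A Hessenberg function on `[n]` (with values queried at `1,…,n`). -/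
def IsHess (n : ℕ) (m : ℕ → ℕ) : Prop :=
  (∀ i, 1 ≤ i → i ≤ n → i ≤ m i ∧ m i ≤ n) ∧
  ∀ i j, 1 ≤ i → i ≤ j → j ≤ n → m i ≤ m j

/-- The set of `F_q`-points of the Hessenberg variety `H(m, T)`. -/
def Hess (F : Type) [Field F] (n : ℕ) (m : ℕ → ℕ) (T : Module.End F (Fin n → F)) :
    Set (ℕ → Submodule F (Fin n → F)) :=
  {V | IsFlag F n V ∧ ∀ i, 1 ≤ i → i ≤ n → (V i).map T ≤ V (m i)}

variable {F : Type} [Field F]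

example (I : Ideal (Polynomial F)) (p w : Polynomial F) :
    p • (Ideal.Quotient.mk I w) = Ideal.Quotient.mk I (p * w) := rfl

lemma torsion_card_one (p h : Polynomial F) (hc : IsCoprime p h) :
    Nat.card {z : Polynomial F ⧸ Ideal.span {h} // p • z = 0} = 1 := by
  rw [Nat.card_eq_one_iff_unique]
  obtain ⟨u, v, huv⟩ := hc
  constructor
  · constructor
    rintro ⟨z, hz⟩ ⟨z', hz'⟩
    obtain ⟨w, rfl⟩ := Ideal.Quotient.mk_surjective z
    obtain ⟨w', rfl⟩ := Ideal.Quotient.mk_surjective z'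
    have key : ∀ w : Polynomial F, p • (Ideal.Quotient.mk (Ideal.span {h}) w) = 0 →
        Ideal.Quotient.mk (Ideal.span {h}) w = 0 := by
      intro w hw
      have h1 : (u * p + v * h) • (Ideal.Quotient.mk (Ideal.span {h}) w) =
          Ideal.Quotient.mk (Ideal.span {h}) w := by rw [huv, one_smul]
      rw [add_smul, mul_smul, mul_smul, hw, smul_zero] at h1
      have h2 : h • (Ideal.Quotient.mk (Ideal.span {h}) w) = 0 := by
        show Ideal.Quotient.mk (Ideal.span {h}) (h * w) = 0
        rw [Ideal.Quotient.eq_zero_iff_mem]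
        exact Ideal.mem_span_singleton.2 (dvd_mul_right h w)
      rw [h2, smul_zero, add_zero] at h1
      exact h1.symm
    exact Subtype.ext ((key w hz).trans (key w' hz').symm)
  · exact ⟨⟨0, smul_zero p⟩⟩

lemma torsion_card_linear [Fintype F] (a : F) {k : ℕ} (hk : 0 < k) :
    Nat.card {z : Polynomial F ⧸ Ideal.span {(X - C a) ^ k} // (X - C a) • z = 0} =
      Fintype.card F := by
  set p : Polynomial F := X - C a with hp
  set I : Ideal (Polynomial F) := Ideal.span {p ^ k} with hI
  have hpk : p ^ k = p * p ^ (k - 1) := by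
    conv_lhs => rw [← Nat.succ_pred_eq_of_pos hk]
    rw [pow_succ']
    rfl
  have hp0 : p ≠ 0 := X_sub_C_ne_zero a
  let φ : F → {z : Polynomial F ⧸ I // p • z = 0} := fun c =>
    ⟨Ideal.Quotient.mk I (C c * p ^ (k - 1)), by
      show Ideal.Quotient.mk I (p * (C c * p ^ (k - 1))) = 0
      rw [Ideal.Quotient.eq_zero_iff_mem]
      refine Ideal.mem_span_singleton.2 ⟨C c, by rw [hpk]; ring⟩⟩
  have hbij : Function.Bijective φ := by
    constructor
    · intro c c' hcc
      have h1 : Ideal.Quotient.mk I (C c * p ^ (k - 1)) =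
          Ideal.Quotient.mk I (C c' * p ^ (k - 1)) := congrArg Subtype.val hcc
      rw [Ideal.Quotient.eq, hI, Ideal.mem_span_singleton, ← sub_mul, ← C_sub, hpk] at h1
      by_contra hne
      have hcu : IsUnit (C (c - c')) := isUnit_C.2 (IsUnit.mk0 _ (sub_ne_zero.2 hne))
      have : p ∣ C (c - c') := by
        have := (mul_dvd_mul_iff_right (pow_ne_zero (k - 1) hp0)).1 h1
        exact this
      exact (Polynomial.irreducible_X_sub_C a).not_isUnit (isUnit_of_dvd_unit this hcu)
    · rintro ⟨z, hz⟩
      obtain ⟨w, rfl⟩ := Ideal.Quotient.mk_surjective z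
      have h1 : p ^ k ∣ p * w := by
        rw [← Ideal.mem_span_singleton, ← hI, ← Ideal.Quotient.eq_zero_iff_mem]
        exact hz
      obtain ⟨s, hs⟩ : p ^ (k - 1) ∣ w := by
        obtain ⟨t, ht⟩ := h1
        rw [hpk, mul_assoc] at ht
        exact ⟨t, mul_left_cancel₀ hp0 ht⟩
      obtain ⟨u, hu⟩ : p ∣ s - C (s.eval a) := X_sub_C_dvd_sub_C_eval
      refine ⟨s.eval a, Subtype.ext ?_⟩
      show Ideal.Quotient.mk I (C (s.eval a) * p ^ (k - 1)) = Ideal.Quotient.mk I w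
      rw [Ideal.Quotient.eq, hI, Ideal.mem_span_singleton, hs]
      refine ⟨-u, ?_⟩
      rw [hpk]
      linear_combination (-(p ^ (k - 1))) * hu
  rw [← Nat.card_eq_of_bijective _ hbij, Nat.card_eq_fintype_card]

open Classical in
lemma eig_card (F : Type) [Field F] [Fintype F] (n : ℕ)
    (T : Module.End F (Fin n → F)) (r : ℕ) (f : Fin r → Polynomial F)
    (hmonic : ∀ i, (f i).Monic) (hirr : ∀ i, Irreducible (f i))
    (len : Fin r → ℕ) (lam : (i : Fin r) → Fin (len i) → ℕ)
    (hpos : ∀ i j, 0 < lam i j)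
    (e : (Module.AEval' (T : (Fin n → F) →ₗ[F] (Fin n → F))) ≃ₗ[Polynomial F]
        ((i : Fin r) → (j : Fin (len i)) →
          (Polynomial F ⧸ Ideal.span {f i ^ lam i j})))
    (a : F) :
    Nat.card {v : Fin n → F // T v = a • v} =
      ∏ i : Fin r, (if f i = X - C a then (Fintype.card F) ^ (len i) else 1) := by
  set p : Polynomial F := X - C a with hp
  -- Step 1: eigenvectors ≃ p-torsion of AEval'
  have E1 : {v : Fin n → F // T v = a • v} ≃
      {x : Module.AEval' (T : (Fin n → F) →ₗ[F] (Fin n → F)) // p • x = 0} := by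
    refine Equiv.subtypeEquiv (Module.AEval'.of T).toEquiv (fun v => ?_)
    simp only [LinearEquiv.coe_toEquiv]
    rw [hp, sub_smul, Module.AEval'.X_smul_of, Module.AEval.C_smul, sub_eq_zero]
    constructor
    · intro h; rw [h]; rfl
    · intro h
      exact (Module.AEval'.of T).injective (by rw [h]; rfl)
  have E2 : {x : Module.AEval' (T : (Fin n → F) →ₗ[F] (Fin n → F)) // p • x = 0} ≃
      {x : (i : Fin r) → (j : Fin (len i)) → (Polynomial F ⧸ Ideal.span {f i ^ lam i j}) //
        p • x = 0} := by
    refine Equiv.subtypeEquiv e.toEquiv (fun x => ?_)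
    simp only [LinearEquiv.coe_toEquiv]
    rw [← map_smul, LinearEquiv.map_eq_zero_iff]
  have E3 : {x : (i : Fin r) → (j : Fin (len i)) → (Polynomial F ⧸ Ideal.span {f i ^ lam i j}) //
        p • x = 0} ≃
      ((i : Fin r) → (j : Fin (len i)) → {z : Polynomial F ⧸ Ideal.span {f i ^ lam i j} //
        p • z = 0}) := by
    exact
      { toFun := fun x i j => ⟨x.1 i j, congrFun (congrFun x.2 i) j⟩
        invFun := fun y => ⟨fun i j => (y i j).1, by funext i j; exact (y i j).2⟩
        left_inv := fun x => rfl
        right_inv := fun y => rfl }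
  rw [Nat.card_congr (E1.trans (E2.trans E3)), Nat.card_pi]
  refine Finset.prod_congr rfl (fun i _ => ?_)
  rw [Nat.card_pi]
  by_cases hfi : f i = p
  · rw [if_pos hfi]
    have : ∀ j : Fin (len i), Nat.card {z : Polynomial F ⧸ Ideal.span {f i ^ lam i j} //
        p • z = 0} = Fintype.card F := by
      intro j
      rw [hfi]
      exact torsion_card_linear a (hpos i j)
    simp only [this, Finset.prod_const, Finset.card_univ, Fintype.card_fin]
  · rw [if_neg hfi]
    have hcop : IsCoprime p (f i) := by
      rw [(Polynomial.irreducible_X_sub_C a).coprime_iff_not_dvd]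
      intro hdvd
      exact hfi (Polynomial.eq_of_monic_of_associated (hmonic i) (monic_X_sub_C a) ((Polynomial.irreducible_X_sub_C a).associated_of_dvd (hirr i) hdvd).symm)
    refine Finset.prod_eq_one (fun j _ => ?_)
    exact torsion_card_one p _ (hcop.pow_right)



open Classical in
lemma count_lemma (F : Type) [Field F] [Fintype F] (n : ℕ)
    (T : Module.End F (Fin n → F)) :
    {W : Submodule F (Fin n → F) | Module.finrank F ↥W = 1 ∧ W.map T ≤ W}.ncard *
      (Fintype.card F - 1) =
    ∑ a : F, (Nat.card {v : Fin n → F // T v = a • v} - 1) := by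
  set V := Fin n → F
  set q := Fintype.card F with hq
  set N : Finset V := univ.filter (fun v => v ≠ 0 ∧ ∃ a : F, T v = a • v) with hN
  set P : Finset (Submodule F V) := N.image (fun v => Submodule.span F {v}) with hP
  -- membership in P
  have hPmem : ∀ W : Submodule F V, W ∈ P ↔
      (Module.finrank F ↥W = 1 ∧ W.map T ≤ W) := by
    intro W
    constructor
    · intro hW
      obtain ⟨v, hv, rfl⟩ := Finset.mem_image.1 hW
      rw [hN, Finset.mem_filter] at hv
      obtain ⟨-, hv0, a, hva⟩ := hv
      refine ⟨finrank_span_singleton hv0, ?_⟩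
      rw [Submodule.map_span, Set.image_singleton, Submodule.span_le,
        Set.singleton_subset_iff]
      rw [hva]
      exact Submodule.smul_mem _ a (Submodule.mem_span_singleton_self v)
    · rintro ⟨hW1, hW2⟩
      obtain ⟨v, hv0, hvgen⟩ := finrank_eq_one_iff'.1 hW1
      have hWspan : W = Submodule.span F {(v : V)} := by
        refine le_antisymm (fun w hw => ?_) ?_
        · obtain ⟨c, hc⟩ := hvgen ⟨w, hw⟩
          have : c • (v : V) = w := congrArg Subtype.val hc
          rw [← this]
          exact Submodule.smul_mem _ c (Submodule.mem_span_singleton_self _)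
        · rw [Submodule.span_le, Set.singleton_subset_iff]
          exact v.2
      have hv0' : (v : V) ≠ 0 := fun h => hv0 (Subtype.ext h)
      have hTv : T ↑v ∈ Submodule.span F {(v : V)} := by
        rw [← hWspan]
        exact hW2 (Submodule.mem_map_of_mem v.2)
      obtain ⟨c, hc⟩ := Submodule.mem_span_singleton.1 hTv
      refine Finset.mem_image.2 ⟨v, ?_, hWspan.symm⟩
      rw [hN, Finset.mem_filter]
      exact ⟨Finset.mem_univ _, hv0', c, hc.symm⟩
  have hScoe : {W : Submodule F V | Module.finrank F ↥W = 1 ∧ W.map T ≤ W} = ↑P := by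
    ext W
    simp only [Set.mem_setOf_eq, Finset.coe_insert, Finset.mem_coe, hPmem]
  rw [hScoe, Set.ncard_coe_finset]
  -- first fiberwise count : N.card = P.card * (q - 1)
  have hcard1 : N.card = P.card * (q - 1) := by
    rw [Finset.card_eq_sum_card_fiberwise
      (f := fun v => Submodule.span F {v}) (t := P)
      (fun v hv => Finset.mem_image_of_mem _ hv)]
    rw [Finset.sum_congr rfl (g := fun _ => q - 1) ?_, Finset.sum_const, smul_eq_mul]
    intro W hW
    have hWP := (hPmem W).1 hW
    have hfiber : N.filter (fun v => Submodule.span F {v} = W) =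
        (univ.filter (fun v => v ∈ W)).erase 0 := by
      ext v
      rw [Finset.mem_filter, hN, Finset.mem_filter, Finset.mem_erase, Finset.mem_filter]
      constructor
      · rintro ⟨⟨-, hv0, -⟩, hvW⟩
        exact ⟨hv0, Finset.mem_univ _, hvW ▸ Submodule.mem_span_singleton_self v⟩
      · rintro ⟨hv0, -, hvW⟩
        have hle : Submodule.span F {v} ≤ W := by
          rw [Submodule.span_le, Set.singleton_subset_iff]; exact hvW
        have heq : Submodule.span F {v} = W :=
          Submodule.eq_of_le_of_finrank_le hle
            (by rw [hWP.1, finrank_span_singleton hv0])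
        have hTv : T v ∈ Submodule.span F {v} :=
          heq.symm ▸ hWP.2 (Submodule.mem_map_of_mem hvW)
        obtain ⟨c, hc⟩ := Submodule.mem_span_singleton.1 hTv
        exact ⟨⟨Finset.mem_univ _, hv0, c, hc.symm⟩, heq⟩
    rw [hfiber, Finset.card_erase_of_mem
      (Finset.mem_filter.2 ⟨Finset.mem_univ _, W.zero_mem⟩)]
    congr 1
    rw [← Fintype.card_subtype]
    rw [show Fintype.card {v : V // v ∈ W} = Fintype.card ↥W from rfl]
    rw [Module.card_eq_pow_finrank (K := F), hWP.1, pow_one]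
  -- second fiberwise count : N.card = ∑ a, (card eigen - 1)
  have hcard2 : N.card = ∑ a : F,
      ((Finset.univ.filter (fun v : V => T v = a • v)).card - 1) := by
    have hg : ∀ v : V, ∃ a : F, v ≠ 0 → (∃ b : F, T v = b • v) → T v = a • v := by
      intro v
      by_cases h : ∃ b : F, T v = b • v
      · obtain ⟨b, hb⟩ := h
        exact ⟨b, fun _ _ => hb⟩
      · exact ⟨0, fun _ hb => absurd hb h⟩
    choose g hgspec using hg
    rw [Finset.card_eq_sum_card_fiberwise (f := g) (t := univ) (fun v _ => Finset.mem_univ _)]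
    refine Finset.sum_congr rfl (fun a _ => ?_)
    have hfiber : N.filter (fun v => g v = a) =
        (univ.filter (fun v : V => T v = a • v)).erase 0 := by
      ext v
      rw [Finset.mem_filter, hN, Finset.mem_filter, Finset.mem_erase, Finset.mem_filter]
      constructor
      · rintro ⟨⟨-, hv0, hex⟩, hgv⟩
        exact ⟨hv0, Finset.mem_univ _, hgv ▸ hgspec v hv0 hex⟩
      · rintro ⟨hv0, -, hva⟩
        have hex : ∃ b : F, T v = b • v := ⟨a, hva⟩
        have h1 : T v = g v • v := hgspec v hv0 hex
        have h2 : g v • v = a • v := h1 ▸ hva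
        have : g v = a := smul_left_injective F hv0 h2
        exact ⟨⟨Finset.mem_univ _, hv0, hex⟩, this⟩
    rw [hfiber, Finset.card_erase_of_mem
      (Finset.mem_filter.2 ⟨Finset.mem_univ _, by rw [map_zero, smul_zero]⟩)]
  rw [← hcard1, hcard2]
  refine Finset.sum_congr rfl (fun a _ => ?_)
  rw [Nat.card_eq_fintype_card, Fintype.card_subtype]




lemma qInt_mul_pred {q : ℕ} (hq : 1 ≤ q) (m : ℕ) : qInt q m * (q - 1) = q ^ m - 1 := by
  induction m with
  | zero => simp [qInt]
  | succ m ih =>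
    have h1 : 1 ≤ q ^ m := Nat.one_le_pow _ _ hq
    rw [qInt, Finset.sum_range_succ, ← qInt, add_mul, ih, pow_succ]
    rw [Nat.mul_sub_one]
    have h2 : q ^ m * 1 ≤ q ^ m * q := Nat.mul_le_mul_left _ hq
    omega

open Classical in
lemma arith_lemma (F : Type) [Field F] [Fintype F] (r : ℕ) (f : Fin r → Polynomial F)
    (hmonic : ∀ i, (f i).Monic) (hdist : Function.Injective f)
    (len : Fin r → ℕ) (q : ℕ) (hq : 1 ≤ q) :
    ∑ a : F, ((∏ i : Fin r, if f i = X - C a then q ^ len i else 1) - 1)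
      = ∑ i ∈ Finset.univ.filter (fun i : Fin r => (f i).natDegree = 1),
          qInt q (len i) * (q - 1) := by
  have step1 : ∀ a : F, ((∏ i : Fin r, if f i = X - C a then q ^ len i else 1) - 1)
      = ∑ i : Fin r, ((if f i = X - C a then q ^ len i else 1) - 1) := by
    intro a
    by_cases h : ∃ i₀, f i₀ = X - C a
    · obtain ⟨i₀, hi₀⟩ := h
      have huniq : ∀ i, i ≠ i₀ → f i ≠ X - C a :=
        fun i hi hfi => hi (hdist (hfi.trans hi₀.symm))
      rw [Finset.prod_eq_single i₀ (fun i _ hi => if_neg (huniq i hi))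
        (fun h => absurd (Finset.mem_univ i₀) h),
        Finset.sum_eq_single i₀ (fun i _ hi => by rw [if_neg (huniq i hi)]; rfl)
        (fun h => absurd (Finset.mem_univ i₀) h)]
    · push_neg at h
      rw [Finset.prod_eq_one (fun i _ => if_neg (h i)),
        Finset.sum_eq_zero (fun i _ => by rw [if_neg (h i)]; rfl)]
      rfl
  rw [Finset.sum_congr rfl (fun a _ => step1 a), Finset.sum_comm, Finset.sum_filter]
  refine Finset.sum_congr rfl (fun i _ => ?_)
  by_cases hdeg : (f i).natDegree = 1
  · have hfi : f i = X - C (-(f i).coeff 0) := by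
      rw [map_neg, sub_neg_eq_add]
      exact (hmonic i).eq_X_add_C hdeg
    rw [if_pos hdeg, qInt_mul_pred hq]
    rw [Finset.sum_eq_single (-(f i).coeff 0) (fun a _ ha => ?_)
      (fun h => absurd (Finset.mem_univ _) h), if_pos hfi]
    rw [if_neg, Nat.sub_self]
    intro hfa
    have h3 : X - C (-(f i).coeff 0) = X - C a := hfi.symm.trans hfa
    exact ha (C_injective (sub_right_injective h3)).symm
  · rw [if_neg hdeg]
    refine Finset.sum_eq_zero (fun a _ => ?_)
    rw [if_neg, Nat.sub_self]
    intro hfa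
    exact hdeg (by rw [hfa]; exact natDegree_X_sub_C _)

/-- If `T` has similarity class type `{(d 1, λ^1), …, (d r, λ^r)}`, encoded by the
`F[t]`-module decomposition of `F^n`, then the number of one-dimensional `T`-invariant
subspaces equals the sum of `[ℓ(λ^i)]_q` over the indices `i` with `d i = 1`. -/
theorem stmt3 (F : Type) [Field F] [Fintype F] (n : ℕ)
    (T : Module.End F (Fin n → F)) (r : ℕ) (f : Fin r → Polynomial F)
    (hmonic : ∀ i, (f i).Monic) (hirr : ∀ i, Irreducible (f i))
    (hdist : Function.Injective f)
    (len : Fin r → ℕ) (lam : (i : Fin r) → Fin (len i) → ℕ)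
    (hpos : ∀ i j, 0 < lam i j)
    (hdecomp : Nonempty
      ((Module.AEval' (T : (Fin n → F) →ₗ[F] (Fin n → F))) ≃ₗ[Polynomial F]
        ((i : Fin r) → (j : Fin (len i)) →
          (Polynomial F ⧸ Ideal.span {f i ^ lam i j})))) :
    {W : Submodule F (Fin n → F) | Module.finrank F ↥W = 1 ∧ W.map T ≤ W}.ncard =
      ∑ i ∈ Finset.univ.filter (fun i : Fin r => (f i).natDegree = 1),
        qInt (Fintype.card F) (len i) := by
  classical
  obtain ⟨e⟩ := hdecomp
  have hq2 : 1 < Fintype.card F := Fintype.one_lt_card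
  have hq1 : 1 ≤ Fintype.card F := hq2.le
  have hmain := count_lemma F n T
  have hkey : ∀ a : F, Nat.card {v : Fin n → F // T v = a • v}
      = ∏ i : Fin r, (if f i = X - C a then (Fintype.card F) ^ (len i) else 1) :=
    eig_card F n T r f hmonic hirr len lam hpos e
  have hpos' : 0 < Fintype.card F - 1 := by omega
  refine Nat.eq_of_mul_eq_mul_right hpos' ?_
  rw [hmain, Finset.sum_congr rfl (fun a _ => by rw [hkey a]),
    arith_lemma F r f hmonic hdist len (Fintype.card F) hq1, ← Finset.sum_mul]
end

section
/- Let n≥2, let T be a linear operator on F_q^n with exactly s one-dimensional T-invariant subspaces, and let m be the Hessenberg function m=(m(1),n,n,…,n) with 1≤m(1)≤n and m(2)=n. Then the number of F_q-points of the Hessenberg variety H(m,T) equals [n-2]_q! · ( [n]_q·[m(1)-1]_q + q^{m(1)-1}·[n-m(1)]_q · s ). -/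
open Module Submodule

namespace Stmt4Aux

/-! ### q-arithmetic lemmas -/

lemma qInt_succ (q a : ℕ) : qInt q (a + 1) = qInt q a + q ^ a :=
  Finset.sum_range_succ _ _

lemma qInt_succ' (q a : ℕ) : qInt q (a + 1) = 1 + q * qInt q a := by
  unfold qInt
  rw [Finset.sum_range_succ']
  simp only [pow_zero, pow_succ, ← Finset.sum_mul]
  ring

lemma qInt_add (q a b : ℕ) : qInt q (a + b) = qInt q a + q ^ a * qInt q b := by
  unfold qInt
  rw [Finset.sum_range_add, Finset.mul_sum]
  congr 1
  refine Finset.sum_congr rfl fun j _ => ?_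
  rw [pow_add]

lemma qFact_succ (q k : ℕ) : qFact q (k + 1) = qFact q k * qInt q (k + 1) :=
  Finset.prod_range_succ _ _

lemma pred_mul_qInt (r N : ℕ) : r * qInt (r + 1) N + 1 = (r + 1) ^ N := by
  induction N with
  | zero => simp [qInt]
  | succ n ih =>
    rw [qInt_succ, pow_succ]
    calc r * (qInt (r + 1) n + (r + 1) ^ n) + 1
        = (r * qInt (r + 1) n + 1) + r * (r + 1) ^ n := by ring
      _ = (r + 1) ^ n + r * (r + 1) ^ n := by rw [ih]
      _ = (r + 1) ^ n * (r + 1) := by ring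

/-! ### general counting helper -/

lemma ncard_fiberwise {α β : Type*} (S : Set α) (hS : S.Finite) (f : α → β) (t : Finset β)
    (h : ∀ a ∈ S, f a ∈ t) : S.ncard = ∑ b ∈ t, {a ∈ S | f a = b}.ncard := by
  classical
  rw [Set.ncard_eq_toFinset_card S hS]
  rw [Finset.card_eq_sum_card_fiberwise (f := f) (t := t)
    (fun a ha => h a (hS.mem_toFinset.mp ha))]
  refine Finset.sum_congr rfl fun b _ => ?_
  have he : {a ∈ S | f a = b} = ↑(hS.toFinset.filter fun a => f a = b) := by
    ext a; simp [Set.mem_setOf_eq]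
  rw [he, Set.ncard_coe_finset]

/-! ### linear algebra setup -/

variable (F : Type) [Field F]

/-- Complete flags of a module, indexed by `ℕ`. -/
def Flags (M : Type) [AddCommGroup M] [Module F M] : Set (ℕ → Submodule F M) :=
  {V | V 0 = ⊥ ∧ V (finrank F M) = ⊤ ∧ (∀ i, V i ≤ V (i + 1)) ∧
    ∀ i, i ≤ finrank F M → finrank F (V i) = i}

variable [Fintype F] {M : Type} [AddCommGroup M] [Module F M] [Module.Finite F M]

lemma finite_submodule : Finite (Submodule F M) := by
  have : Finite M := Module.finite_of_finite F
  exact Finite.of_injective (fun p => (p : Set M)) SetLike.coe_injective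

lemma flags_finite : (Flags F M).Finite := by
  have : Finite (Submodule F M) := finite_submodule F
  set N := finrank F M
  apply Set.Finite.subset (Set.finite_range
    (fun (g : Fin (N + 1) → Submodule F M) => fun i : ℕ =>
      if h : i < N + 1 then g ⟨i, h⟩ else ⊤))
  rintro V ⟨-, htop, hchain, -⟩
  have mono : Monotone V := monotone_nat_of_le_succ hchain
  refine ⟨fun j => V j, ?_⟩
  funext i
  by_cases h : i < N + 1
  · simp [h]
  · have hN : N ≤ i := by omega
    have : (⊤ : Submodule F M) ≤ V i := htop ▸ mono hN
    simp [h, le_antisymm le_top this]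

lemma nat_card_module : Nat.card M = Fintype.card F ^ finrank F M := by
  have : Finite M := Module.finite_of_finite F
  have : Fintype M := Fintype.ofFinite M
  rw [Nat.card_eq_fintype_card]
  exact card_eq_pow_finrank

lemma finrank_map_mkQ_add {L U : Submodule F M} (h : L ≤ U) :
    finrank F (U.map L.mkQ) + finrank F L = finrank F U := by
  have h1 := LinearMap.finrank_range_add_finrank_ker (L.mkQ.domRestrict U)
  rw [LinearMap.range_domRestrict, LinearMap.ker_domRestrict, Submodule.ker_mkQ,
    (Submodule.comapSubtypeEquivOfLe h).finrank_eq] at h1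
  exact h1

lemma finrank_map_mkQ_of_disjoint {L U : Submodule F M} (h : U ⊓ L = ⊥) :
    finrank F (U.map L.mkQ) = finrank F U := by
  have h1 := LinearMap.finrank_range_add_finrank_ker (L.mkQ.domRestrict U)
  have hker : LinearMap.ker (L.mkQ.domRestrict U) = ⊥ := by
    rw [LinearMap.ker_domRestrict, Submodule.ker_mkQ, eq_bot_iff]
    rintro ⟨x, hxU⟩ hx
    have : x ∈ U ⊓ L := ⟨hxU, hx⟩
    rw [h] at this
    simpa [Submodule.mem_bot] using this
  rw [LinearMap.range_domRestrict, hker, finrank_bot] at h1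
  simpa using h1

/-- The number of lines of a finite vector space. -/
lemma ncard_lines :
    {W : Submodule F M | finrank F W = 1}.ncard = qInt (Fintype.card F) (finrank F M) := by
  classical
  have : Finite M := Module.finite_of_finite F
  have : Finite (Submodule F M) := finite_submodule F
  set q := Fintype.card F with hq
  set N := finrank F M with hN
  set lines : Set (Submodule F M) := {W | finrank F W = 1} with hlines
  have hlf : lines.Finite := Set.toFinite _
  set t := hlf.toFinset with ht
  set S : Set M := {v | v ≠ 0} with hSdef
  have hSf : S.Finite := Set.toFinite _
  have key := ncard_fiberwise S hSf (fun v => Submodule.span F {v}) t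
    (fun v hv => by
      simp only [ht, Set.Finite.mem_toFinset, hlines, Set.mem_setOf_eq]
      exact finrank_span_singleton hv)
  have hfib : ∀ W ∈ t, {v ∈ S | Submodule.span F {v} = W} = (W : Set M) \ {0} := by
    intro W hW
    have hW1 : finrank F W = 1 := by
      simpa only [ht, Set.Finite.mem_toFinset, hlines, Set.mem_setOf_eq] using hW
    ext v
    constructor
    · rintro ⟨hv, hspan⟩
      exact ⟨hspan ▸ Submodule.mem_span_singleton_self v, hv⟩
    · rintro ⟨hvW, hv0⟩
      have hv0' : v ≠ 0 := hv0
      refine ⟨hv0', ?_⟩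
      have hle : Submodule.span F {v} ≤ W := by
        rwa [Submodule.span_singleton_le_iff_mem]
      exact Submodule.eq_of_le_of_finrank_le hle
        (by rw [hW1, finrank_span_singleton hv0'])
  have hfibcard : ∀ W ∈ t, {v ∈ S | Submodule.span F {v} = W}.ncard = q - 1 := by
    intro W hW
    have hW1 : finrank F W = 1 := by
      simpa only [ht, Set.Finite.mem_toFinset, hlines, Set.mem_setOf_eq] using hW
    rw [hfib W hW]
    have hc : ((W : Set M)).ncard = q := by
      rw [← Nat.card_coe_set_eq]
      have : Nat.card (W : Set M) = Nat.card W := rfl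
      rw [this, nat_card_module F (M := W), hW1, pow_one]
    rw [Set.ncard_diff_singleton_of_mem W.zero_mem, hc]
  have hsum : S.ncard = t.card * (q - 1) := by
    rw [key, Finset.sum_congr rfl hfibcard, Finset.sum_const, smul_eq_mul]
  have hScard : S.ncard + 1 = q ^ N := by
    have huniv : (Set.univ : Set M) = insert (0 : M) S := by
      ext v; by_cases hv : v = 0 <;> simp [hSdef, hv]
    have h0 : (0 : M) ∉ S := by simp [hSdef]
    have : (Set.univ : Set M).ncard = S.ncard + 1 := by
      rw [huniv, Set.ncard_insert_of_notMem h0 hSf]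
    rw [← this, Set.ncard_univ, nat_card_module F]
  have hq2 : 2 ≤ q := Fintype.one_lt_card
  obtain ⟨r, hr⟩ : ∃ r, q = r + 1 := ⟨q - 1, by omega⟩
  have hgeom := pred_mul_qInt r N
  rw [← hr] at hgeom
  have hcard_t : t.card = lines.ncard := (Set.ncard_eq_toFinset_card _ _).symm
  have hr0 : 0 < r := by omega
  have h1 : lines.ncard * r + 1 = q ^ N := by
    rw [← hcard_t]
    have hqr : q - 1 = r := by omega
    rw [← hqr, ← hsum]
    exact hScard
  have h2 : qInt q N * r + 1 = q ^ N := by rw [mul_comm]; exact hgeom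
  exact Nat.eq_of_mul_eq_mul_right hr0 (by omega)

set_option linter.unusedSectionVars false

lemma flags_mono {V : ℕ → Submodule F M} (hV : V ∈ Flags F M) : Monotone V :=
  monotone_nat_of_le_succ hV.2.2.1

/-- The fundamental bijection: flags with prescribed line `V 1 = L` (and a containment
condition `U ≤ V k`) correspond to flags of the quotient `M ⧸ L`. -/
lemma fiber_ncard (L : Submodule F M) (hL : finrank F L = 1) (U : Submodule F M)
    (k : ℕ) (hk : 1 ≤ k) :
    {V | V ∈ Flags F M ∧ V 1 = L ∧ U ≤ V k}.ncard
      = {W | W ∈ Flags F (M ⧸ L) ∧ U.map L.mkQ ≤ W (k - 1)}.ncard := by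
  classical
  set NQ := finrank F (M ⧸ L) with hNQ
  have hrk : NQ + 1 = finrank F M := by
    have := Submodule.finrank_quotient_add_finrank L
    omega
  set Φ : (ℕ → Submodule F M) → (ℕ → Submodule F (M ⧸ L)) :=
    fun V i => (V (i + 1)).map L.mkQ with hΦ
  have hmapself : L.map L.mkQ = ⊥ := by
    rw [eq_bot_iff, Submodule.map_le_iff_le_comap, Submodule.comap_bot, Submodule.ker_mkQ]
  have hMapsTo : ∀ V ∈ {V | V ∈ Flags F M ∧ V 1 = L ∧ U ≤ V k},
      Φ V ∈ {W | W ∈ Flags F (M ⧸ L) ∧ U.map L.mkQ ≤ W (k - 1)} := by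
    rintro V ⟨hV, hV1, hU⟩
    have mono := flags_mono F hV
    obtain ⟨hbot, htop, hchain, hdim⟩ := hV
    have hLle : ∀ i, 1 ≤ i → L ≤ V i := fun i hi => hV1 ▸ mono hi
    refine ⟨⟨?_, ?_, ?_, ?_⟩, ?_⟩
    · show (V 1).map L.mkQ = ⊥
      rw [hV1, hmapself]
    · show (V (NQ + 1)).map L.mkQ = ⊤
      rw [hrk, htop, Submodule.map_top, Submodule.range_mkQ]
    · intro i
      exact Submodule.map_mono (hchain (i + 1))
    · intro i hi
      have h1 : finrank F ((V (i + 1)).map L.mkQ) + finrank F L = finrank F (V (i + 1)) :=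
        finrank_map_mkQ_add F (hLle (i + 1) (by omega))
      have h2 : finrank F (V (i + 1)) = i + 1 := hdim (i + 1) (by omega)
      show finrank F ((V (i + 1)).map L.mkQ) = i
      omega
    · show U.map L.mkQ ≤ (V (k - 1 + 1)).map L.mkQ
      have : k - 1 + 1 = k := by omega
      rw [this]
      exact Submodule.map_mono hU
  have hInj : Set.InjOn Φ {V | V ∈ Flags F M ∧ V 1 = L ∧ U ≤ V k} := by
    rintro V ⟨hV, hV1, -⟩ V' ⟨hV', hV1', -⟩ hVV
    have key : ∀ (W : ℕ → Submodule F M), W ∈ Flags F M → W 1 = L →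
        ∀ j, W (j + 1) = (Φ W j).comap L.mkQ := by
      intro W hW hW1 j
      have mono := flags_mono F hW
      have hLle : L ≤ W (j + 1) := hW1 ▸ mono (by omega)
      rw [hΦ]
      simp only
      rw [Submodule.comap_map_eq, Submodule.ker_mkQ, sup_eq_left.mpr hLle]
    funext i
    cases i with
    | zero => rw [hV.1, hV'.1]
    | succ j => rw [key V hV hV1 j, key V' hV' hV1' j, hVV]
  have hSurj : Set.SurjOn Φ {V | V ∈ Flags F M ∧ V 1 = L ∧ U ≤ V k}
      {W | W ∈ Flags F (M ⧸ L) ∧ U.map L.mkQ ≤ W (k - 1)} := by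
    rintro W ⟨hW, hUW⟩
    obtain ⟨hbot, htop, hchain, hdim⟩ := hW
    set V : ℕ → Submodule F M := fun i => if i = 0 then ⊥ else (W (i - 1)).comap L.mkQ
      with hVdef
    have hΦV : Φ V = W := by
      funext i
      show ((if i + 1 = 0 then ⊥ else (W (i + 1 - 1)).comap L.mkQ) : Submodule F M).map L.mkQ
        = W i
      simp only [Nat.succ_ne_zero, if_false, Nat.add_sub_cancel]
      exact Submodule.map_comap_eq_of_surjective (Submodule.mkQ_surjective L) _
    have hV1 : V 1 = L := by
      show (W 0).comap L.mkQ = L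
      rw [hbot, Submodule.comap_bot, Submodule.ker_mkQ]
    refine ⟨V, ⟨⟨?_, ?_, ?_, ?_⟩, hV1, ?_⟩, hΦV⟩
    · simp [hVdef]
    · show V (finrank F M) = ⊤
      rw [← hrk]
      show (W (NQ + 1 - 1)).comap L.mkQ = ⊤
      rw [Nat.add_sub_cancel, htop, Submodule.comap_top]
    · intro i
      cases i with
      | zero => exact bot_le
      | succ j =>
        show (W j).comap L.mkQ ≤ (W (j + 1)).comap L.mkQ
        exact Submodule.comap_mono (hchain j)
    · intro i hi
      cases i with
      | zero => simp [hVdef]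
      | succ j =>
        show finrank F ((W j).comap L.mkQ) = j + 1
        have hLle : L ≤ (W j).comap L.mkQ := by
          intro x hx
          have hx0 : L.mkQ x = 0 := (Submodule.Quotient.mk_eq_zero L).mpr hx
          show L.mkQ x ∈ W j
          rw [hx0]; exact zero_mem _
        have h1 := finrank_map_mkQ_add F hLle
        rw [Submodule.map_comap_eq_of_surjective (Submodule.mkQ_surjective L)] at h1
        have h2 : finrank F (W j) = j := hdim j (by omega)
        omega
    · show U ≤ V k
      obtain ⟨k', rfl⟩ : ∃ k', k = k' + 1 := ⟨k - 1, by omega⟩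
      show U ≤ (W (k' + 1 - 1)).comap L.mkQ
      rw [Nat.add_sub_cancel, ← Submodule.map_le_iff_le_comap]
      simpa using hUW
  have himg := Set.BijOn.image_eq ⟨hMapsTo, hInj, hSurj⟩
  rw [← himg, Set.ncard_image_of_injOn hInj]


lemma flags_fixed_line_ncard (L : Submodule F M) (hL : finrank F L = 1) :
    {V | V ∈ Flags F M ∧ V 1 = L}.ncard = (Flags F (M ⧸ L)).ncard := by
  have h := fiber_ncard F L hL ⊥ 1 le_rfl
  have e1 : {V | V ∈ Flags F M ∧ V 1 = L ∧ ⊥ ≤ V 1} = {V | V ∈ Flags F M ∧ V 1 = L} := by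
    ext V; simp
  have e2 : {W | W ∈ Flags F (M ⧸ L) ∧ (⊥ : Submodule F M).map L.mkQ ≤ W (1 - 1)}
      = Flags F (M ⧸ L) := by
    ext W; simp [Submodule.map_bot]
  rw [e1, e2] at h
  exact h

lemma flags_ncard_aux : ∀ (N : ℕ) (M : Type) [AddCommGroup M] [Module F M] [Module.Finite F M],
    finrank F M = N → (Flags F M).ncard = qFact (Fintype.card F) N := by
  intro N
  induction N with
  | zero =>
    intro M _ _ _ h0
    have hsub : Subsingleton M := by
      have : Module.finrank F M = 0 := h0
      exact Module.finrank_zero_iff.mp this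
    have hsub2 : Subsingleton (Submodule F M) :=
      ⟨fun p q => by
        ext x
        have : x = 0 := Subsingleton.elim x 0
        simp [this]⟩
    have hFlags : Flags F M = {fun _ => ⊥} := by
      ext V
      constructor
      · intro _
        funext i
        exact Subsingleton.elim _ _
      · rintro rfl
        refine ⟨rfl, Subsingleton.elim _ _, fun i => le_rfl, fun i hi => ?_⟩
        have hi0 : i = 0 := by omega
        subst hi0
        simp
    rw [hFlags, Set.ncard_singleton]
    simp [qFact]
  | succ N ih =>
    intro M _ _ _ hN
    classical
    have : Finite (Submodule F M) := finite_submodule F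
    set q := Fintype.card F with hq
    set lines : Set (Submodule F M) := {W | finrank F W = 1} with hlines
    have hlf : lines.Finite := Set.toFinite _
    have hpart := ncard_fiberwise (Flags F M) (flags_finite F) (fun V => V 1) hlf.toFinset
      (fun V hV => by
        simp only [Set.Finite.mem_toFinset, hlines, Set.mem_setOf_eq]
        exact hV.2.2.2 1 (by omega))
    rw [hpart]
    clear hpart
    have hfib : ∀ L ∈ hlf.toFinset,
        {a ∈ Flags F M | (fun V => V 1) a = L}.ncard = qFact q N := by
      intro L hLm
      have hL : finrank F L = 1 := by
        simpa only [Set.Finite.mem_toFinset, hlines, Set.mem_setOf_eq] using hLm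
      have e : {a ∈ Flags F M | (fun V => V 1) a = L} = {V | V ∈ Flags F M ∧ V 1 = L} := rfl
      rw [e, flags_fixed_line_ncard F L hL]
      have hrkQ : finrank F (M ⧸ L) = N := by
        have := Submodule.finrank_quotient_add_finrank L
        omega
      exact ih (M ⧸ L) hrkQ
    rw [Finset.sum_congr rfl hfib, Finset.sum_const, smul_eq_mul]
    have hcard : hlf.toFinset.card = qInt q (N + 1) := by
      rw [← Set.ncard_eq_toFinset_card lines hlf]
      have := ncard_lines F (M := M)
      rwa [hN] at this
    rw [hcard, qFact_succ, mul_comm]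

lemma gcount : ∀ (k : ℕ) (M : Type) [AddCommGroup M] [Module F M] [Module.Finite F M]
    (L : Submodule F M), finrank F L = 1 → k ≤ finrank F M →
    {W | W ∈ Flags F M ∧ L ≤ W k}.ncard
      = qInt (Fintype.card F) k * qFact (Fintype.card F) (finrank F M - 1) := by
  intro k
  induction k with
  | zero =>
    intro M _ _ _ L hL hk
    have he : {W | W ∈ Flags F M ∧ L ≤ W 0} = ∅ := by
      ext W
      simp only [Set.mem_setOf_eq, Set.mem_empty_iff_false, iff_false, not_and]
      intro hW hle
      rw [hW.1] at hle
      have : L = ⊥ := le_bot_iff.mp hle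
      rw [this, finrank_bot] at hL
      omega
    rw [he]
    simp [qInt]
  | succ k ih =>
    intro M _ _ _ L hL hk
    classical
    have : Finite (Submodule F M) := finite_submodule F
    set q := Fintype.card F with hq
    set N := finrank F M with hN
    set lines : Set (Submodule F M) := {W | finrank F W = 1} with hlines
    have hlf : lines.Finite := Set.toFinite _
    set S : Set (ℕ → Submodule F M) := {W | W ∈ Flags F M ∧ L ≤ W (k + 1)} with hS
    have hSfin : S.Finite := (flags_finite F).subset (fun V hV => hV.1)
    have hpart := ncard_fiberwise S hSfin (fun V => V 1) hlf.toFinset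
      (fun V hV => by
        simp only [Set.Finite.mem_toFinset, hlines, Set.mem_setOf_eq]
        exact hV.1.2.2.2 1 (by omega))
    have hLmem : L ∈ hlf.toFinset := by
      simp only [Set.Finite.mem_toFinset, hlines, Set.mem_setOf_eq]; exact hL
    -- value of each fiber
    have hfibval : ∀ L₂ ∈ hlf.toFinset,
        {a ∈ S | (fun V => V 1) a = L₂}.ncard =
          if L₂ = L then qFact q (N - 1) else qInt q k * qFact q (N - 2) := by
      intro L₂ hL₂m
      have hL₂ : finrank F L₂ = 1 := by
        simpa only [Set.Finite.mem_toFinset, hlines, Set.mem_setOf_eq] using hL₂m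
      have e : {a ∈ S | (fun V => V 1) a = L₂}
          = {V | V ∈ Flags F M ∧ V 1 = L₂ ∧ L ≤ V (k + 1)} := by
        ext V
        simp only [hS, Set.mem_setOf_eq]
        tauto
      rw [e, fiber_ncard F L₂ hL₂ L (k + 1) (Nat.le_add_left 1 k)]
      have hrkQ : finrank F (M ⧸ L₂) = N - 1 := by
        clear hpart
        have := Submodule.finrank_quotient_add_finrank L₂
        omega
      by_cases hcase : L₂ = L
      · subst hcase
        rw [if_pos rfl]
        have hmb : L₂.map L₂.mkQ = ⊥ := by
          rw [eq_bot_iff, Submodule.map_le_iff_le_comap, Submodule.comap_bot, Submodule.ker_mkQ]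
        have e2 : {W | W ∈ Flags F (M ⧸ L₂) ∧ L₂.map L₂.mkQ ≤ W (k + 1 - 1)}
            = Flags F (M ⧸ L₂) := by
          ext W; simp [hmb]
        rw [e2]
        exact flags_ncard_aux F (N - 1) (M ⧸ L₂) hrkQ
      · rw [if_neg hcase]
        -- L and L₂ are distinct lines, hence disjoint
        have hdisj : L ⊓ L₂ = ⊥ := by
          by_contra hne
          obtain ⟨x, hx, hx0⟩ := Submodule.ne_bot_iff _ |>.mp hne
          have hsp1 : Submodule.span F {x} = L :=
            Submodule.eq_of_le_of_finrank_le
              ((Submodule.span_singleton_le_iff_mem _ _).mpr hx.1)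
              (by rw [hL, finrank_span_singleton hx0])
          have hsp2 : Submodule.span F {x} = L₂ :=
            Submodule.eq_of_le_of_finrank_le
              ((Submodule.span_singleton_le_iff_mem _ _).mpr hx.2)
              (by rw [hL₂, finrank_span_singleton hx0])
          exact hcase (hsp2 ▸ hsp1)
        have hrkL' : finrank F (L.map L₂.mkQ) = 1 := by
          rw [finrank_map_mkQ_of_disjoint F hdisj, hL]
        have e3 : {W | W ∈ Flags F (M ⧸ L₂) ∧ L.map L₂.mkQ ≤ W (k + 1 - 1)}
            = {W | W ∈ Flags F (M ⧸ L₂) ∧ L.map L₂.mkQ ≤ W k} := by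
          norm_num
        have hkle : k ≤ finrank F (M ⧸ L₂) := by clear hpart; omega
        rw [e3, ih (M ⧸ L₂) (L.map L₂.mkQ) hrkL' hkle, hrkQ]
        have h21 : N - 1 - 1 = N - 2 := by clear hpart; omega
        rw [h21]
    rw [hpart, Finset.sum_congr rfl hfibval, ← Finset.add_sum_erase _ _ hLmem, if_pos rfl]
    clear hpart hfibval
    have herase : ∀ L₂ ∈ hlf.toFinset.erase L,
        (if L₂ = L then qFact q (N - 1) else qInt q k * qFact q (N - 2))
          = qInt q k * qFact q (N - 2) := by
      intro L₂ hL₂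
      rw [if_neg (Finset.ne_of_mem_erase hL₂)]
    rw [Finset.sum_congr rfl herase, Finset.sum_const, smul_eq_mul]
    have hcard : hlf.toFinset.card = qInt q N := by
      rw [← Set.ncard_eq_toFinset_card lines hlf]
      exact ncard_lines F (M := M)
    rw [Finset.card_erase_of_mem hLmem, hcard]
    -- final arithmetic
    have hN1 : 1 ≤ N := by omega
    have hqN : qInt q N = 1 + q * qInt q (N - 1) := by
      have hNe : N = (N - 1) + 1 := by omega
      calc qInt q N = qInt q ((N - 1) + 1) := by rw [← hNe]
        _ = 1 + q * qInt q (N - 1) := qInt_succ' q (N - 1)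
    have hsub : qInt q N - 1 = q * qInt q (N - 1) := by omega
    rw [hsub]
    have hgoal : qInt q (k + 1) = 1 + q * qInt q k := qInt_succ' q k
    rw [hgoal]
    rcases Nat.lt_or_ge N 2 with h2 | h2
    · -- N = 1, hence k = 0
      have hNeq : N = 1 := by omega
      have hkeq : k = 0 := by omega
      subst hkeq
      rw [hNeq]
      simp [qInt]
    · have hfact : qFact q (N - 1) = qFact q (N - 2) * qInt q (N - 1) := by
        have : N - 1 = (N - 2) + 1 := by omega
        rw [this, qFact_succ]
      rw [hfact]
      ring


end Stmt4Aux

/-- For the Hessenberg function `m = (m 1, n, n, …, n)` and an operator `T` with exactly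
`s` one-dimensional invariant subspaces,
`|H(m,T)| = [n-2]_q! ⬝ ([n]_q [m(1)-1]_q + q^(m(1)-1) [n-m(1)]_q ⬝ s)`. -/
theorem stmt4 (F : Type) [Field F] [Fintype F] (n : ℕ) (hn : 2 ≤ n)
    (T : Module.End F (Fin n → F)) (m1 : ℕ) (hm1 : 1 ≤ m1) (hm1n : m1 ≤ n)
    (s : ℕ)
    (hs : {W : Submodule F (Fin n → F) | Module.finrank F ↥W = 1 ∧ W.map T ≤ W}.ncard = s) :
    (Hess F n (fun i => if i = 1 then m1 else n) T).ncard =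
      qFact (Fintype.card F) (n - 2) *
        (qInt (Fintype.card F) n * qInt (Fintype.card F) (m1 - 1) +
          (Fintype.card F) ^ (m1 - 1) * qInt (Fintype.card F) (n - m1) * s) := by
  classical
  open Stmt4Aux in
  set q := Fintype.card F with hq
  have hrkM : finrank F (Fin n → F) = n := Module.finrank_fin_fun F
  -- identify the Hessenberg variety with flags satisfying a single condition
  have hHess : Hess F n (fun i => if i = 1 then m1 else n) T
      = {V | V ∈ Stmt4Aux.Flags F (Fin n → F) ∧ (V 1).map T ≤ V m1} := by
    ext V
    simp only [Hess, IsFlag, Stmt4Aux.Flags, Set.mem_setOf_eq, hrkM]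
    constructor
    · rintro ⟨hV, hcond⟩
      refine ⟨hV, ?_⟩
      have := hcond 1 le_rfl (by omega)
      simpa using this
    · rintro ⟨hV, hcond⟩
      refine ⟨hV, ?_⟩
      intro i hi1 hin
      by_cases hi : i = 1
      · subst hi; simpa using hcond
      · rw [if_neg hi, hV.2.1]
        exact le_top
  rw [hHess]
  set S : Set (ℕ → Submodule F (Fin n → F)) :=
    {V | V ∈ Stmt4Aux.Flags F (Fin n → F) ∧ (V 1).map T ≤ V m1} with hSdef
  have : Finite (Submodule F (Fin n → F)) := Stmt4Aux.finite_submodule F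
  set lines : Set (Submodule F (Fin n → F)) := {W | finrank F W = 1} with hlines
  have hlf : lines.Finite := Set.toFinite _
  have hSfin : S.Finite := (Stmt4Aux.flags_finite F).subset (fun V hV => hV.1)
  have hpart := Stmt4Aux.ncard_fiberwise S hSfin (fun V => V 1) hlf.toFinset
    (fun V hV => by
      simp only [Set.Finite.mem_toFinset, hlines, Set.mem_setOf_eq]
      exact hV.1.2.2.2 1 (by rw [hrkM]; omega))
  set C := qInt q (m1 - 1) * qFact q (n - 2) with hC
  set D := q ^ (m1 - 1) * qInt q (n - m1) * qFact q (n - 2) with hD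
  have hfibval : ∀ L ∈ hlf.toFinset,
      {a ∈ S | (fun V => V 1) a = L}.ncard = if L.map T ≤ L then C + D else C := by
    intro L hLm
    have hL : finrank F L = 1 := by
      simpa only [Set.Finite.mem_toFinset, hlines, Set.mem_setOf_eq] using hLm
    have e : {a ∈ S | (fun V => V 1) a = L}
        = {V | V ∈ Stmt4Aux.Flags F (Fin n → F) ∧ V 1 = L ∧ L.map T ≤ V m1} := by
      ext V
      simp only [hSdef, Set.mem_setOf_eq]
      constructor
      · rintro ⟨⟨hV, hc⟩, h1⟩
        exact ⟨hV, h1, h1 ▸ hc⟩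
      · rintro ⟨hV, h1, hc⟩
        exact ⟨⟨hV, h1 ▸ hc⟩, h1⟩
    rw [e, Stmt4Aux.fiber_ncard F L hL (L.map T) m1 hm1]
    have hrkQ : finrank F ((Fin n → F) ⧸ L) = n - 1 := by
      clear hpart
      have := Submodule.finrank_quotient_add_finrank L
      omega
    have hmapself : L.map L.mkQ = ⊥ := by
      rw [eq_bot_iff, Submodule.map_le_iff_le_comap, Submodule.comap_bot, Submodule.ker_mkQ]
    by_cases hinv : L.map T ≤ L
    · rw [if_pos hinv]
      have hbot : (L.map T).map L.mkQ = ⊥ :=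
        le_bot_iff.mp (hmapself ▸ Submodule.map_mono hinv)
      have e2 : {W | W ∈ Stmt4Aux.Flags F ((Fin n → F) ⧸ L) ∧
          (L.map T).map L.mkQ ≤ W (m1 - 1)} = Stmt4Aux.Flags F ((Fin n → F) ⧸ L) := by
        ext W; simp [hbot]
      rw [e2, Stmt4Aux.flags_ncard_aux F (n - 1) _ hrkQ]
      -- qFact q (n-1) = C + D
      have hfact : qFact q (n - 1) = qFact q (n - 2) * qInt q (n - 1) := by
        have hNe : n - 1 = (n - 2) + 1 := by clear hpart; omega
        rw [hNe, qFact_succ]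
      have hqint : qInt q (n - 1) = qInt q (m1 - 1) + q ^ (m1 - 1) * qInt q (n - m1) := by
        have hNe : n - 1 = (m1 - 1) + (n - m1) := by clear hpart; omega
        rw [hNe, qInt_add]
      rw [hfact, hqint, hC, hD]
      ring
    · rw [if_neg hinv]
      have hrk1 : finrank F (L.map T) = 1 := by
        have hle : finrank F (L.map T) ≤ 1 := hL ▸ Submodule.finrank_map_le T L
        clear hpart
        rcases Nat.lt_or_ge (finrank F (L.map T)) 1 with h0 | h1
        · exfalso
          have : finrank F (L.map T) = 0 := by omega
          have hb : L.map T = ⊥ := Submodule.finrank_eq_zero.mp this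
          exact hinv (hb ▸ bot_le)
        · omega
      have hdisj : (L.map T) ⊓ L = ⊥ := by
        by_contra hne
        obtain ⟨x, hx, hx0⟩ := Submodule.ne_bot_iff _ |>.mp hne
        have hsp1 : Submodule.span F {x} = L.map T :=
          Submodule.eq_of_le_of_finrank_le
            ((Submodule.span_singleton_le_iff_mem _ _).mpr hx.1)
            (by rw [hrk1, finrank_span_singleton hx0])
        have hsp2 : Submodule.span F {x} = L :=
          Submodule.eq_of_le_of_finrank_le
            ((Submodule.span_singleton_le_iff_mem _ _).mpr hx.2)
            (by rw [hL, finrank_span_singleton hx0])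
        exact hinv (le_of_eq (hsp1 ▸ hsp2 ▸ rfl) |>.trans le_rfl)
      have hrkL' : finrank F ((L.map T).map L.mkQ) = 1 := by
        rw [Stmt4Aux.finrank_map_mkQ_of_disjoint F hdisj, hrk1]
      have hkle : m1 - 1 ≤ finrank F ((Fin n → F) ⧸ L) := by clear hpart; omega
      rw [Stmt4Aux.gcount F (m1 - 1) _ ((L.map T).map L.mkQ) hrkL' hkle, hrkQ]
      have h21 : n - 1 - 1 = n - 2 := by clear hpart; omega
      rw [h21, hC]
  rw [hpart, Finset.sum_congr rfl hfibval]
  clear hpart hfibval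
  have hite : ∀ L ∈ hlf.toFinset, (if L.map T ≤ L then C + D else C)
      = C + (if L.map T ≤ L then D else 0) := by
    intro L _
    by_cases hinv : L.map T ≤ L <;> simp [hinv]
  rw [Finset.sum_congr rfl hite, Finset.sum_add_distrib, Finset.sum_const, smul_eq_mul]
  have hcardlines : hlf.toFinset.card = qInt q n := by
    rw [← Set.ncard_eq_toFinset_card lines hlf]
    have := Stmt4Aux.ncard_lines F (M := Fin n → F)
    rwa [hrkM] at this
  have hfilter : (∑ L ∈ hlf.toFinset, if L.map T ≤ L then D else 0)
      = (hlf.toFinset.filter fun L => L.map T ≤ L).card * D := by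
    rw [← Finset.sum_filter, Finset.sum_const, smul_eq_mul]
  have hfcard : (hlf.toFinset.filter fun L => L.map T ≤ L).card = s := by
    rw [← hs]
    have e : {W : Submodule F (Fin n → F) | Module.finrank F ↥W = 1 ∧ W.map T ≤ W}
        = ↑(hlf.toFinset.filter fun L => L.map T ≤ L) := by
      ext W
      simp [hlines, and_comm]
    rw [e, Set.ncard_coe_finset]
  rw [hfilter, hfcard, hcardlines, hC, hD]
  ring
end

section
/- Let m_0, m_1, m_2 be Hessenberg functions on [n] satisfying condition (1) of the modular law at index i (that is: m_1(i-1) < m_1(i) < m_1(i+1), m_1(m_1(i)) = m_1(m_1(i)+1), and for k∈{0,2}, m_k(j)=m_1(j) for j≠i while m_k(i)=m_1(i)-1+k). Then for every linear operator T on F_q^n, the point counts satisfy (1+q)·|H(m_1,T)| = q·|H(m_0,T)| + |H(m_2,T)|. -/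
set_option linter.unusedSectionVars false
set_option maxHeartbeats 1600000

namespace StmtAux

open Submodule Module

variable {F : Type} [Field F] [Fintype F] {n : ℕ}

instance : Finite (Submodule F (Fin n → F)) :=
  Finite.of_injective (fun W => (W : Set (Fin n → F))) SetLike.coe_injective

lemma flagMono {V : ℕ → Submodule F (Fin n → F)} (hV : IsFlag F n V) : Monotone V :=
  monotone_nat_of_le_succ hV.2.2.1

lemma flagRank {V : ℕ → Submodule F (Fin n → F)} (hV : IsFlag F n V) {j : ℕ} (hj : j ≤ n) :
    Module.finrank F ↥(V j) = j := hV.2.2.2 j hj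

lemma flagLt {V : ℕ → Submodule F (Fin n → F)} (hV : IsFlag F n V) {a b : ℕ}
    (hab : a < b) (hb : b ≤ n) : V a < V b := by
  refine lt_of_le_of_ne (flagMono hV hab.le) fun h => ?_
  have h1 := flagRank hV (le_trans hab.le hb)
  rw [h, flagRank hV hb] at h1
  omega

lemma card_coe (W : Submodule F (Fin n → F)) :
    (W : Set (Fin n → F)).ncard = Fintype.card F ^ Module.finrank F ↥W := by
  classical
  rw [← Nat.card_coe_set_eq, Nat.card_eq_fintype_card]
  exact card_eq_pow_finrank

lemma finrank_sup_le' (P Q : Submodule F (Fin n → F)) :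
    Module.finrank F ↥(P ⊔ Q) ≤ Module.finrank F ↥P + Module.finrank F ↥Q := by
  have h := Submodule.finrank_sup_add_finrank_inf_eq P Q
  omega

lemma span_singleton_rank_le (v : Fin n → F) :
    Module.finrank F ↥(Submodule.span F ({v} : Set (Fin n → F))) ≤ 1 := by
  rcases eq_or_ne v 0 with rfl | hv
  · rw [Submodule.span_zero_singleton]; simp
  · rw [finrank_span_singleton hv]

lemma exists_succ_gen {P Q : Submodule F (Fin n → F)} (hPQ : P ≤ Q)
    (hr : Module.finrank F ↥Q ≤ Module.finrank F ↥P + 1) :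
    ∃ v, Q = P ⊔ Submodule.span F {v} := by
  rcases eq_or_lt_of_le hPQ with rfl | hlt
  · exact ⟨0, by simp⟩
  · obtain ⟨v, hvQ, hvP⟩ := SetLike.exists_of_lt hlt
    refine ⟨v, ?_⟩
    have h1 : P ⊔ Submodule.span F {v} ≤ Q :=
      sup_le hPQ ((Submodule.span_singleton_le_iff_mem v Q).2 hvQ)
    have h2 : P < P ⊔ Submodule.span F {v} := by
      refine lt_of_le_of_ne le_sup_left fun h => hvP ?_
      rw [h]
      exact Submodule.mem_sup_right (Submodule.mem_span_singleton_self v)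
    have h3 := Submodule.finrank_lt_finrank_of_lt h2
    exact (Submodule.eq_of_le_of_finrank_le h1 (by omega)).symm

lemma ncard_eq_ncard_mul {α β : Type*} {s : Set α} {t : Set β} (f : α → β) (k : ℕ)
    (hs : s.Finite) (ht : t.Finite)
    (hmaps : ∀ a ∈ s, f a ∈ t)
    (hfib : ∀ b ∈ t, {a | a ∈ s ∧ f a = b}.ncard = k) :
    s.ncard = t.ncard * k := by
  classical
  have key : ∀ b, {a | a ∈ s ∧ f a = b} =
      ↑(hs.toFinset.filter (fun a => f a = b)) := by
    intro b; ext a; simp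
  rw [Set.ncard_eq_toFinset_card _ hs, Set.ncard_eq_toFinset_card _ ht,
    Finset.card_eq_sum_card_fiberwise
      (t := ht.toFinset) (f := f)
      (fun a ha => ht.mem_toFinset.2 (hmaps a (hs.mem_toFinset.1 ha)))]
  rw [Finset.sum_congr rfl (fun b hb => ?_), Finset.sum_const, smul_eq_mul]
  rw [← hfib b (ht.mem_toFinset.1 hb), key b, Set.ncard_coe_finset]

lemma count_middle {P₁ P₂ P₃ : Submodule F (Fin n → F)} (h12 : P₁ < P₂) (h23 : P₂ < P₃)
    (h3 : Module.finrank F ↥P₃ = Module.finrank F ↥P₁ + 2) :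
    {W : Submodule F (Fin n → F) | P₁ < W ∧ W < P₃ ∧ W ≠ P₂}.ncard = Fintype.card F := by
  classical
  set q := Fintype.card F with hqdef
  set r := Module.finrank F ↥P₁ with hrdef
  have hq : 2 ≤ q := Fintype.one_lt_card
  have hr2 : Module.finrank F ↥P₂ = r + 1 := by
    have ha := Submodule.finrank_lt_finrank_of_lt h12
    have hb := Submodule.finrank_lt_finrank_of_lt h23
    omega
  have hrankW : ∀ W : Submodule F (Fin n → F), P₁ < W → W < P₃ →
      Module.finrank F ↥W = r + 1 := by
    intro W hW1 hW3
    have ha := Submodule.finrank_lt_finrank_of_lt hW1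
    have hb := Submodule.finrank_lt_finrank_of_lt hW3
    omega
  set S := {W : Submodule F (Fin n → F) | P₁ < W ∧ W < P₃ ∧ W ≠ P₂} with hSdef
  set D := (P₃ : Set (Fin n → F)) \ (P₂ : Set (Fin n → F)) with hDdef
  have hg : ∀ v : Fin n → F, v ∈ D → P₁ ⊔ Submodule.span F {v} ∈ S := by
    rintro v ⟨hv3, hv2⟩
    have hv1 : v ∉ P₁ := fun h => hv2 (h12.le h)
    have hmem : v ∈ P₁ ⊔ Submodule.span F {v} :=
      Submodule.mem_sup_right (Submodule.mem_span_singleton_self v)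
    have hle3 : P₁ ⊔ Submodule.span F {v} ≤ P₃ :=
      sup_le (h12.le.trans h23.le) ((Submodule.span_singleton_le_iff_mem v P₃).2 hv3)
    have hrle : Module.finrank F ↥(P₁ ⊔ Submodule.span F {v}) ≤ r + 1 := by
      have := finrank_sup_le' P₁ (Submodule.span F {v})
      have := span_singleton_rank_le v
      omega
    refine ⟨lt_of_le_of_ne le_sup_left fun h => hv1 (h ▸ hmem), ?_, fun h => hv2 (h ▸ hmem)⟩
    refine lt_of_le_of_ne hle3 fun h => ?_
    rw [h, h3] at hrle; omega
  have hfib : ∀ W ∈ S, {v | v ∈ D ∧ P₁ ⊔ Submodule.span F {v} = W}.ncard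
      = q ^ (r + 1) - q ^ r := by
    rintro W ⟨hW1, hW3, hWne⟩
    have hrW : Module.finrank F ↥W = r + 1 := hrankW W hW1 hW3
    have hset : {v | v ∈ D ∧ P₁ ⊔ Submodule.span F {v} = W}
        = (W : Set (Fin n → F)) \ (P₁ : Set (Fin n → F)) := by
      ext w
      constructor
      · rintro ⟨⟨hw3, hw2⟩, hgw⟩
        refine ⟨?_, fun h => hw2 (h12.le h)⟩
        rw [← hgw]
        exact Submodule.mem_sup_right (Submodule.mem_span_singleton_self w)
      · rintro ⟨hwW, hw1⟩
        have hwW' : (w : Fin n → F) ∈ W := hwW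
        have hle : P₁ ⊔ Submodule.span F {w} ≤ W :=
          sup_le hW1.le ((Submodule.span_singleton_le_iff_mem w W).2 hwW')
        have hlt : P₁ < P₁ ⊔ Submodule.span F {w} := by
          refine lt_of_le_of_ne le_sup_left fun h => hw1 ?_
          rw [h]; exact Submodule.mem_sup_right (Submodule.mem_span_singleton_self w)
        have hr' := Submodule.finrank_lt_finrank_of_lt hlt
        have hgw : P₁ ⊔ Submodule.span F {w} = W :=
          Submodule.eq_of_le_of_finrank_le hle (by omega)
        have hw2 : w ∉ P₂ := by
          intro hw2
          apply hWne
          have hle2 : P₁ ⊔ Submodule.span F {w} ≤ P₂ :=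
            sup_le h12.le ((Submodule.span_singleton_le_iff_mem w P₂).2 hw2)
          rw [hgw] at hle2
          exact Submodule.eq_of_le_of_finrank_le hle2 (by omega)
        exact ⟨⟨hW3.le hwW', hw2⟩, hgw⟩
    rw [hset, Set.ncard_diff (by exact_mod_cast hW1.le) (Set.toFinite _),
      card_coe, card_coe, hrW, ← hrdef]
  have hDcard : D.ncard = q ^ (r + 2) - q ^ (r + 1) := by
    rw [hDdef, Set.ncard_diff (by exact_mod_cast h23.le) (Set.toFinite _),
      card_coe, card_coe, h3, hr2, ← hqdef]
  have hmain := ncard_eq_ncard_mul (fun v => P₁ ⊔ Submodule.span F {v})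
    (q ^ (r + 1) - q ^ r) (Set.toFinite D) (Set.toFinite S) hg hfib
  rw [hDcard] at hmain
  have hpos : 0 < q ^ (r + 1) - q ^ r := by
    have h1 : q ^ r < q ^ (r + 1) := Nat.pow_lt_pow_right (by omega) (by omega)
    omega
  have hqq : q ^ (r + 2) - q ^ (r + 1) = q * (q ^ (r + 1) - q ^ r) := by
    rw [Nat.mul_sub, ← pow_succ', ← pow_succ']
  rw [hqq] at hmain
  exact Nat.eq_of_mul_eq_mul_right hpos hmain.symm

end StmtAux

open StmtAux Submodule Module

/-- The modular law, condition (1): if `m₀, m₁, m₂` are Hessenberg functions related by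
condition (1) at index `i`, then `(1+q)|H(m₁,T)| = q|H(m₀,T)| + |H(m₂,T)|`.
(We use the convention `m₁ 0 = 0`.) -/
theorem stmt6 (F : Type) [Field F] [Fintype F] (n : ℕ)
    (m₀ m₁ m₂ : ℕ → ℕ) (h₀ : IsHess n m₀) (h₁ : IsHess n m₁) (h₂ : IsHess n m₂)
    (hconv : m₁ 0 = 0)
    (i : ℕ) (hi1 : 1 ≤ i) (hin : i ≤ n - 1)
    (ha : m₁ (i - 1) < m₁ i) (hb : m₁ i < m₁ (i + 1))
    (hc : m₁ (m₁ i) = m₁ (m₁ i + 1))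
    (hoff : ∀ j, j ≠ i → m₀ j = m₁ j ∧ m₂ j = m₁ j)
    (h0i : m₀ i = m₁ i - 1) (h2i : m₂ i = m₁ i + 1)
    (T : Module.End F (Fin n → F)) :
    (1 + Fintype.card F) * (Hess F n m₁ T).ncard =
      Fintype.card F * (Hess F n m₀ T).ncard + (Hess F n m₂ T).ncard := by
  classical
  set q := Fintype.card F with hqdef
  have hn2 : 2 ≤ n := by omega
  have hi1n : i + 1 ≤ n := by omega
  set m := m₁ i with hmdef
  have him : i + 1 ≤ m := by
    have h1 := (h₀.1 i hi1 (by omega)).1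
    omega
  have hmn : m + 1 ≤ n := by
    have h2 := (h₁.1 (i + 1) (by omega) hi1n).2
    omega
  have huniq : ∀ j, 1 ≤ j → j ≤ n → j ≠ i → m₁ j ≠ m := by
    intro j hj1 hjn hji heq
    rcases lt_or_gt_of_ne hji with hlt | hgt
    · have := h₁.2 j (i - 1) hj1 (by omega) (by omega)
      omega
    · have := h₁.2 (i + 1) j (by omega) (by omega) hjn
      omega
  have hm_m : m < m₁ m := by
    have := h₁.2 (i + 1) m (by omega) him (by omega)
    omega
  have hcm : m₁ (m + 1) = m₁ m := hc.symm
  set A := Hess F n m₁ T with hA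
  set B := Hess F n m₀ T with hB
  set X := Hess F n m₂ T with hX
  have hBA : B ⊆ A := by
    rintro V ⟨hfl, hh⟩
    refine ⟨hfl, fun j hj1 hjn => ?_⟩
    rcases eq_or_ne j i with rfl | hji
    · have h3 := hh j hj1 hjn
      rw [h0i] at h3
      rw [← hmdef]
      exact h3.trans (flagMono hfl (by omega))
    · have h3 := hh j hj1 hjn
      rwa [(hoff j hji).1] at h3
  have hAX : A ⊆ X := by
    rintro V ⟨hfl, hh⟩
    refine ⟨hfl, fun j hj1 hjn => ?_⟩
    rcases eq_or_ne j i with rfl | hji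
    · rw [h2i]
      exact (hh j hj1 hjn).trans (flagMono hfl (by omega))
    · rw [(hoff j hji).2]
      exact hh j hj1 hjn
  have hXA : ∀ V ∈ X, ((V i).map T ≤ V m ↔ V ∈ A) := by
    rintro V ⟨hfl, hh⟩
    constructor
    · intro hle
      refine ⟨hfl, fun j hj1 hjn => ?_⟩
      rcases eq_or_ne j i with rfl | hji
      · rwa [← hmdef]
      · rw [← (hoff j hji).2]; exact hh j hj1 hjn
    · intro hVA
      have h3 := hVA.2 i hi1 (by omega)
      rwa [← hmdef] at h3
  have hAB : ∀ V ∈ A, ((V i).map T ≤ V (m - 1) ↔ V ∈ B) := by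
    rintro V ⟨hfl, hh⟩
    constructor
    · intro hle
      refine ⟨hfl, fun j hj1 hjn => ?_⟩
      rcases eq_or_ne j i with rfl | hji
      · rwa [h0i]
      · rw [(hoff j hji).1]; exact hh j hj1 hjn
    · intro hVB
      have h3 := hVB.2 i hi1 (by omega)
      rwa [h0i] at h3
  have hXfin : X.Finite := by
    apply Set.Finite.subset (Set.finite_range
      (fun (W : Fin (n + 1) → Submodule F (Fin n → F)) (j : ℕ) =>
        if h : j ≤ n then W ⟨j, by omega⟩ else ⊤))
    rintro V ⟨hfl, -⟩
    refine ⟨fun k => V k, ?_⟩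
    funext j
    by_cases hj : j ≤ n
    · simp [hj]
    · simp only [dif_neg hj]
      have h1 : V n ≤ V j := flagMono hfl (by omega)
      rw [hfl.2.1] at h1
      exact (top_le_iff.1 h1).symm
  have hAfin := hXfin.subset hAX
  have hBfin := hAfin.subset hBA
  have hdim : ∀ V ∈ X, ¬(V i).map T ≤ V (m - 1) →
      Module.finrank F ↥(V (m - 1) ⊔ (V i).map T) = m := by
    rintro V ⟨hfl, hh⟩ hnle
    have hTim : (V (i - 1)).map T ≤ V (m - 1) := by
      rcases eq_or_ne i 1 with hi2 | hi2
      · rw [hi2]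
        norm_num
        rw [hfl.1, Submodule.map_bot]
        exact bot_le
      · have h1 := hh (i - 1) (by omega) (by omega)
        rw [(hoff (i - 1) (by omega)).2] at h1
        exact h1.trans (flagMono hfl (by omega))
    obtain ⟨v, hv⟩ := exists_succ_gen (P := V (i - 1)) (Q := V i)
      (flagMono hfl (by omega))
      (by rw [flagRank hfl (by omega), flagRank hfl (by omega)]; omega)
    have hmap : (V i).map T = (V (i - 1)).map T ⊔ Submodule.span F {T v} := by
      rw [hv, Submodule.map_sup, Submodule.map_span, Set.image_singleton]
    have hsup : V (m - 1) ⊔ (V i).map T = V (m - 1) ⊔ Submodule.span F {T v} := by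
      rw [hmap, ← sup_assoc, sup_eq_left.2 hTim]
    have h1lt : V (m - 1) < V (m - 1) ⊔ (V i).map T := by
      refine lt_of_le_of_ne le_sup_left fun h => hnle ?_
      conv_rhs => rw [h]
      exact le_sup_right
    have h1 := Submodule.finrank_lt_finrank_of_lt h1lt
    have h2 : Module.finrank F ↥(V (m - 1) ⊔ (V i).map T) ≤ (m - 1) + 1 := by
      rw [hsup]
      have h3 := finrank_sup_le' (V (m - 1)) (Submodule.span F {T v})
      have h4 := span_singleton_rank_le (T v)
      have h5 : Module.finrank F ↥(V (m - 1)) = m - 1 := flagRank hfl (by omega)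
      omega
    rw [flagRank hfl (show m - 1 ≤ n by omega)] at h1
    omega
  have hmapsXA : ∀ V ∈ X \ A,
      Function.update V m (V (m - 1) ⊔ (V i).map T) ∈ A \ B := by
    rintro V ⟨hVX, hVA⟩
    obtain ⟨hfl, hhs⟩ := hVX
    have hVX' : V ∈ X := ⟨hfl, hhs⟩
    have hnlem : ¬(V i).map T ≤ V m := fun h => hVA ((hXA V hVX').1 h)
    have hnle : ¬(V i).map T ≤ V (m - 1) := fun h =>
      hnlem (h.trans (flagMono hfl (by omega)))
    have hPrank := hdim V hVX' hnle
    have hTile : (V i).map T ≤ V (m + 1) := by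
      have h3 := hhs i hi1 (by omega)
      rwa [h2i] at h3
    have hPle : V (m - 1) ⊔ (V i).map T ≤ V (m + 1) :=
      sup_le (flagMono hfl (by omega)) hTile
    have hfVj : ∀ j, j ≠ m →
        Function.update V m (V (m - 1) ⊔ (V i).map T) j = V j :=
      fun j hj => Function.update_of_ne hj _ _
    have hfVm : Function.update V m (V (m - 1) ⊔ (V i).map T) m
        = V (m - 1) ⊔ (V i).map T := Function.update_self _ _ _
    constructor
    · refine ⟨⟨?_, ?_, ?_, ?_⟩, fun j hj1 hjn => ?_⟩
      · rw [hfVj 0 (by omega)]; exact hfl.1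
      · rw [hfVj n (by omega)]; exact hfl.2.1
      · intro j
        rcases eq_or_ne j m with rfl | hjm
        · rw [hfVm, hfVj (m + 1) (by omega)]
          exact hPle
        · rcases eq_or_ne (j + 1) m with hjm1 | hjm1
          · rw [hfVj j hjm, hjm1, hfVm]
            have hjq : j = m - 1 := by omega
            rw [hjq]
            exact le_sup_left
          · rw [hfVj j hjm, hfVj (j + 1) hjm1]
            exact hfl.2.2.1 j
      · intro j hjn
        rcases eq_or_ne j m with rfl | hjm
        · rw [hfVm]; exact hPrank
        · rw [hfVj j hjm]; exact flagRank hfl hjn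
      · rcases eq_or_ne j i with rfl | hji
        · rw [hfVj j (by omega), ← hmdef, hfVm]
          exact le_sup_right
        · rcases eq_or_ne j m with rfl | hjm
          · rw [hfVm, hfVj (m₁ m) hm_m.ne']
            refine (Submodule.map_mono hPle).trans ?_
            have h6 := hhs (m + 1) (by omega) (by omega)
            rw [(hoff (m + 1) (by omega)).2, hcm] at h6
            exact h6
          · rw [hfVj j hjm, hfVj (m₁ j) (huniq j hj1 hjn hji)]
            have h6 := hhs j hj1 hjn
            rwa [(hoff j hji).2] at h6
    · intro hVB
      have hfVA := hBA hVB
      have h7 := (hAB _ hfVA).2 hVB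
      rw [hfVj i (by omega), hfVj (m - 1) (by omega)] at h7
      exact hnle h7
  have hfibXA : ∀ y ∈ A \ B,
      {V | V ∈ X \ A ∧ Function.update V m (V (m - 1) ⊔ (V i).map T) = y}.ncard = q := by
    rintro y ⟨hyA, hynB⟩
    have hyfl := hyA.1
    have hTy : (y i).map T ≤ y m := by
      have h3 := hyA.2 i hi1 (by omega)
      rwa [← hmdef] at h3
    have hTy' : ¬(y i).map T ≤ y (m - 1) := fun h => hynB ((hAB y hyA).1 h)
    have hyX : y ∈ X := hAX hyA
    have hymrank := hdim y hyX hTy'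
    have hym : y m = y (m - 1) ⊔ (y i).map T := by
      refine (Submodule.eq_of_le_of_finrank_le
        (sup_le (flagMono hyfl (by omega)) hTy) ?_).symm
      rw [flagRank hyfl (by omega), hymrank]
    have hseteq : {V | V ∈ X \ A ∧ Function.update V m (V (m - 1) ⊔ (V i).map T) = y}
        = Function.update y m ''
          {W | y (m - 1) < W ∧ W < y (m + 1) ∧ W ≠ y m} := by
      ext V
      constructor
      · rintro ⟨⟨hVX, hVA⟩, hfV⟩
        have hVfl := hVX.1
        have hVj : ∀ j, j ≠ m → V j = y j := by
          intro j hj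
          rw [← hfV, Function.update_of_ne hj]
        have hnlem : ¬(V i).map T ≤ V m := fun h => hVA ((hXA V hVX).1 h)
        refine ⟨V m, ⟨?_, ?_, ?_⟩, ?_⟩
        · rw [← hVj (m - 1) (by omega)]
          exact flagLt hVfl (by omega) (by omega)
        · rw [← hVj (m + 1) (by omega)]
          exact flagLt hVfl (by omega) (by omega)
        · intro hWeq
          apply hnlem
          have h8 : y m = V (m - 1) ⊔ (V i).map T := by
            rw [← hfV, Function.update_self]
          rw [hWeq, h8]
          exact le_sup_right
        · funext j
          rcases eq_or_ne j m with rfl | hj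
          · rw [Function.update_self]
          · rw [Function.update_of_ne hj, hVj j hj]
      · rintro ⟨W, ⟨hW1, hW2, hW3⟩, rfl⟩
        have hyj : ∀ j, j ≠ m → Function.update y m W j = y j :=
          fun j hj => Function.update_of_ne hj _ _
        have hWm : Function.update y m W m = W := Function.update_self _ _ _
        have hWrank : Module.finrank F ↥W = m := by
          have u1 := Submodule.finrank_lt_finrank_of_lt hW1
          have u2 := Submodule.finrank_lt_finrank_of_lt hW2
          rw [flagRank hyfl (by omega)] at u1
          rw [flagRank hyfl (by omega)] at u2
          omega
        have hVX : Function.update y m W ∈ X := by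
          refine ⟨⟨?_, ?_, ?_, ?_⟩, fun j hj1 hjn => ?_⟩
          · rw [hyj 0 (by omega)]; exact hyfl.1
          · rw [hyj n (by omega)]; exact hyfl.2.1
          · intro j
            rcases eq_or_ne j m with rfl | hjm
            · rw [hWm, hyj (m + 1) (by omega)]
              exact hW2.le
            · rcases eq_or_ne (j + 1) m with hjm1 | hjm1
              · rw [hyj j hjm, hjm1, hWm]
                have hjq : j = m - 1 := by omega
                rw [hjq]
                exact hW1.le
              · rw [hyj j hjm, hyj (j + 1) hjm1]
                exact hyfl.2.2.1 j
          · intro j hjn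
            rcases eq_or_ne j m with rfl | hjm
            · rw [hWm]; exact hWrank
            · rw [hyj j hjm]; exact flagRank hyfl hjn
          · rcases eq_or_ne j i with rfl | hji
            · rw [h2i, hyj j (by omega), hyj (m + 1) (by omega)]
              exact hTy.trans (flagMono hyfl (by omega))
            · rcases eq_or_ne j m with rfl | hjm
              · rw [hWm, (hoff m (by omega)).2, hyj (m₁ m) hm_m.ne']
                refine (Submodule.map_mono hW2.le).trans ?_
                have h6 := hyA.2 (m + 1) (by omega) (by omega)
                rw [hcm] at h6
                exact h6
              · rw [hyj j hjm, (hoff j hji).2, hyj (m₁ j) (huniq j hj1 hjn hji)]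
                exact hyA.2 j hj1 hjn
        have hVA : Function.update y m W ∉ A := by
          intro hmem
          have h7 := (hXA _ hVX).2 hmem
          rw [hyj i (by omega), hWm] at h7
          have h8 : y m ≤ W := by
            rw [hym]
            exact sup_le hW1.le h7
          exact hW3 (Submodule.eq_of_le_of_finrank_le h8
            (by rw [flagRank hyfl (by omega), hWrank])).symm
        refine ⟨⟨hVX, hVA⟩, ?_⟩
        have h9 : Function.update y m W (m - 1) ⊔
            ((Function.update y m W) i).map T = y m := by
          rw [hyj (m - 1) (by omega), hyj i (by omega), hym]
        rw [Function.update_idem, h9, Function.update_eq_self]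
    have c3 : Module.finrank F ↥(y (m + 1)) = Module.finrank F ↥(y (m - 1)) + 2 := by
      rw [flagRank hyfl (by omega), flagRank hyfl (by omega)]
      omega
    rw [hseteq, Set.ncard_image_of_injective _ (Function.update_injective y m)]
    exact count_middle (flagLt hyfl (by omega) (by omega))
      (flagLt hyfl (by omega) (by omega)) c3
  have hkey : (X \ A).ncard = (A \ B).ncard * q :=
    ncard_eq_ncard_mul _ q (hXfin.diff (t := A)) (hAfin.diff (t := B)) hmapsXA hfibXA
  have e1 := Set.ncard_diff_add_ncard_of_subset hAX hXfin
  have e2 := Set.ncard_diff_add_ncard_of_subset hBA hAfin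
  rw [← e1, ← e2, hkey]
  ring
end

section
/- Let m_0, m_1, m_2 be Hessenberg functions on [n] satisfying condition (2) of the modular law at index i (that is: m_1(i+1)=m_1(i)+1, no j has m_1(j)=i, and for k∈{0,2}, m_k(j)=m_1(j) for j≠i,i+1, while m_0(i)=m_0(i+1)=m_1(i) and m_2(i)=m_2(i+1)=m_1(i+1)). Then for every linear operator T on F_q^n, (1+q)·|H(m_1,T)| = q·|H(m_0,T)| + |H(m_2,T)|. -/
open Module Submodule

section AuxLemmas

variable {F : Type} [Field F] {M : Type*} [AddCommGroup M] [Module F M]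

/-- rank of image in quotient -/
lemma finrank_map_mkQ_add [FiniteDimensional F M] (A U : Submodule F M) (h : A ≤ U) :
    finrank F (U.map A.mkQ) + finrank F A = finrank F U := by
  let f : U →ₗ[F] M ⧸ A := A.mkQ.comp U.subtype
  have hr : LinearMap.range f = U.map A.mkQ := by
    rw [LinearMap.range_comp, Submodule.range_subtype]
  have hk : LinearMap.ker f = Submodule.comap U.subtype A := by
    rw [LinearMap.ker_comp, Submodule.ker_mkQ]
  have := LinearMap.finrank_range_add_finrank_ker f
  rw [hr, hk] at this
  have h2 : finrank F (Submodule.comap U.subtype A) = finrank F A := by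
    exact LinearEquiv.finrank_eq (Submodule.comapSubtypeEquivOfLe h)
  rw [h2] at this
  simpa using this

/-- number of lines in a 2-dimensional space over a finite field -/
lemma lines_ncard [Fintype F] (h2 : finrank F M = 2) :
    {L : Submodule F M | finrank F L = 1}.ncard = Fintype.card F + 1 := by
  have : FiniteDimensional F M := Module.finite_of_finrank_eq_succ h2
  let b : Basis (Fin 2) F M := finBasisOfFinrankEq F M h2
  let g : Option F → Submodule F M := fun o =>
    Option.rec (F ∙ b 1) (fun c => F ∙ (b 0 + c • b 1)) o
  have hb1 : (b 1 : M) ≠ 0 := b.ne_zero 1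
  have hne : ∀ c : F, b 0 + c • b 1 ≠ 0 := by
    intro c h
    have := congrArg (fun x => b.repr x 0) h
    simp at this
  have himg : {L : Submodule F M | finrank F L = 1} = Set.range g := by
    ext L
    constructor
    · intro hL
      have hLbot : L ≠ ⊥ := by
        intro h; rw [h] at hL; simp [finrank_bot] at hL
      obtain ⟨v, hvL, hv0⟩ := Submodule.exists_mem_ne_zero_of_ne_bot hLbot
      have hspan : L = F ∙ v := by
        refine (Submodule.eq_of_le_of_finrank_le ?_ ?_).symm
        · rwa [Submodule.span_singleton_le_iff_mem]
        · rw [hL, finrank_span_singleton hv0]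
      have hv : v = b.repr v 0 • b 0 + b.repr v 1 • b 1 := by
        have := b.sum_repr v
        rw [Fin.sum_univ_two] at this
        exact this.symm
      set a := b.repr v 0
      set c := b.repr v 1
      by_cases ha : a = 0
      · refine ⟨none, ?_⟩
        have hc : c ≠ 0 := by
          intro hc; rw [ha, hc] at hv; simp at hv; exact hv0 hv
        simp only [g]
        rw [hspan, hv, ha, zero_smul, zero_add,
          Submodule.span_singleton_smul_eq (IsUnit.mk0 c hc) _]
      · refine ⟨some (a⁻¹ * c), ?_⟩
        simp only [g]
        rw [hspan, hv]
        have : a • (b 0 + (a⁻¹ * c) • b 1) = a • b 0 + c • b 1 := by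
          rw [smul_add, smul_smul, mul_inv_cancel_left₀ ha]
        rw [← this, Submodule.span_singleton_smul_eq (IsUnit.mk0 a ha) _]
    · rintro ⟨o, rfl⟩
      cases o with
      | none => exact finrank_span_singleton hb1
      | some c => exact finrank_span_singleton (hne c)
  have hinj : Function.Injective g := by
    intro o o' h
    have key : ∀ x y : M, (F ∙ x) = (F ∙ y) → ∃ u : Fˣ, u • x = y :=
      fun x y h => (Submodule.span_singleton_eq_span_singleton (R := F) (M := M)).1 h
    match o, o' with
    | none, none => rfl
    | some c, some c' =>
      obtain ⟨u, hu⟩ := key _ _ h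
      have h0 := congrArg (fun x => b.repr x 0) hu
      have h1 := congrArg (fun x => b.repr x 1) hu
      simp [Units.smul_def] at h0 h1
      simp [h0] at h1
      rw [h1]
    | none, some c =>
      obtain ⟨u, hu⟩ := key _ _ h
      have h0 := congrArg (fun x => b.repr x 0) hu
      simp [Units.smul_def] at h0
    | some c, none =>
      obtain ⟨u, hu⟩ := key _ _ h
      have h0 := congrArg (fun x => b.repr x 0) hu
      simp [Units.smul_def] at h0
  rw [himg, ← Set.image_univ, Set.ncard_image_of_injective _ hinj, Set.ncard_univ,
    Nat.card_eq_fintype_card, Fintype.card_option]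

lemma between_ncard [Fintype F] [FiniteDimensional F M] (A B : Submodule F M) (d : ℕ)
    (hAB : A ≤ B) (hA : finrank F A = d) (hB : finrank F B = d + 2) :
    {U : Submodule F M | A ≤ U ∧ U ≤ B ∧ finrank F U = d + 1}.ncard = Fintype.card F + 1 := by
  set Q : Submodule F (M ⧸ A) := B.map A.mkQ with hQ
  have hQ2 : finrank F Q = 2 := by
    have := finrank_map_mkQ_add A B hAB
    rw [← hQ] at this
    omega
  have hsurj : Function.Surjective A.mkQ := Submodule.mkQ_surjective A
  let Φ : Submodule F Q → Submodule F M := fun L => Submodule.comap A.mkQ (L.map Q.subtype)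
  have hmapback : ∀ L : Submodule F Q, Submodule.map A.mkQ (Φ L) = L.map Q.subtype := by
    intro L
    exact Submodule.map_comap_eq_of_surjective hsurj _
  have hΦinj : Function.Injective Φ := by
    intro L L' h
    have := congrArg (Submodule.map A.mkQ) h
    rw [hmapback, hmapback] at this
    exact Submodule.map_injective_of_injective (Submodule.injective_subtype Q) this
  have himg : {U : Submodule F M | A ≤ U ∧ U ≤ B ∧ finrank F U = d + 1} =
      Φ '' {L : Submodule F Q | finrank F L = 1} := by
    ext U
    constructor
    · rintro ⟨hAU, hUB, hU⟩
      have hUQ : U.map A.mkQ ≤ Q := Submodule.map_mono hUB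
      refine ⟨Submodule.comap Q.subtype (U.map A.mkQ), ?_, ?_⟩
      · have hms : Submodule.map Q.subtype (Submodule.comap Q.subtype (U.map A.mkQ)) =
            U.map A.mkQ := by
          rw [Submodule.map_comap_subtype, inf_eq_right.2 hUQ]
        have h1 : finrank F (U.map A.mkQ) = 1 := by
          have := finrank_map_mkQ_add A U hAU
          omega
        have := Submodule.finrank_map_subtype_eq Q (Submodule.comap Q.subtype (U.map A.mkQ))
        rw [hms] at this
        simp only [Set.mem_setOf_eq]
        omega
      · show Submodule.comap A.mkQ _ = U
        rw [Submodule.map_comap_subtype, inf_eq_right.2 hUQ, Submodule.comap_map_mkQ,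
          sup_eq_right.2 hAU]
    · rintro ⟨L, hL, rfl⟩
      simp only [Set.mem_setOf_eq] at hL
      have hsub : L.map Q.subtype ≤ Q := Submodule.map_subtype_le Q L
      have hle : A ≤ Φ L := by
        intro x hx
        rw [Submodule.mem_comap]
        have hz : A.mkQ x = 0 := by
          rw [Submodule.mkQ_apply, Submodule.Quotient.mk_eq_zero]; exact hx
        rw [hz]; exact Submodule.zero_mem _
      have hleB : Φ L ≤ B := by
        have : Φ L ≤ Submodule.comap A.mkQ Q := Submodule.comap_mono hsub
        rwa [hQ, Submodule.comap_map_mkQ, sup_eq_right.2 hAB] at this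
      refine ⟨hle, hleB, ?_⟩
      have h1 : finrank F (Submodule.map A.mkQ (Φ L)) = finrank F L := by
        rw [hmapback]; exact Submodule.finrank_map_subtype_eq Q L
      have := finrank_map_mkQ_add A (Φ L) hle
      omega
  rw [himg, Set.ncard_image_of_injective _ hΦinj]
  exact lines_ncard hQ2

lemma kernel_singleton [FiniteDimensional F M] (T : M →ₗ[F] M) (A B R R' : Submodule F M)
    (d : ℕ) (hAB : A ≤ B) (hA : finrank F A = d) (hB : finrank F B = d + 2)
    (hTA : Submodule.map T A ≤ R) (hTB : Submodule.map T B ≤ R')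
    (hRR' : R ≤ R') (hrk : finrank F R' ≤ finrank F R + 1)
    (hnot : ¬ Submodule.map T B ≤ R) :
    {U : Submodule F M | A ≤ U ∧ U ≤ B ∧ finrank F U = d + 1 ∧ Submodule.map T U ≤ R} =
      {B ⊓ Submodule.comap T R} := by
  set K : Submodule F M := B ⊓ Submodule.comap T R with hK
  have hAK : A ≤ K := le_inf hAB (Submodule.map_le_iff_le_comap.1 hTA)
  have hKB : K ≤ B := inf_le_left
  have hTK : Submodule.map T K ≤ R :=
    Submodule.map_le_iff_le_comap.2 inf_le_right
  have hKne : K ≠ B := by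
    intro h
    exact hnot (by rw [← h]; exact hTK)
  have hKlt : finrank F K < d + 2 := by
    rw [← hB]
    exact Submodule.finrank_lt_finrank_of_lt (lt_of_le_of_ne hKB hKne)
  have hKge : d + 1 ≤ finrank F K := by
    let g : B →ₗ[F] M ⧸ R := R.mkQ.comp (T.comp B.subtype)
    have hkerg : LinearMap.ker g = Submodule.comap B.subtype (Submodule.comap T R) := by
      rw [LinearMap.ker_comp, Submodule.ker_mkQ, Submodule.comap_comp]
    have hkermap : Submodule.map B.subtype (LinearMap.ker g) = K := by
      rw [hkerg, Submodule.map_comap_subtype]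
    have hkerrank : finrank F (LinearMap.ker g) = finrank F K := by
      rw [← hkermap]
      exact (Submodule.finrank_map_subtype_eq B _).symm
    have hrange : LinearMap.range g ≤ Submodule.map R.mkQ R' := by
      rw [LinearMap.range_comp, LinearMap.range_comp, Submodule.range_subtype]
      exact Submodule.map_mono hTB
    have hrank1 : finrank F (Submodule.map R.mkQ R') ≤ 1 := by
      have := finrank_map_mkQ_add R R' hRR'
      omega
    have hranklt : finrank F (LinearMap.range g) ≤ 1 :=
      le_trans (Submodule.finrank_mono hrange) hrank1
    have := LinearMap.finrank_range_add_finrank_ker g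
    rw [hkerrank] at this
    omega
  have hKrank : finrank F K = d + 1 := by omega
  ext U
  simp only [Set.mem_setOf_eq, Set.mem_singleton_iff]
  constructor
  · rintro ⟨hAU, hUB, hU, hTU⟩
    have hUK : U ≤ K := le_inf hUB (Submodule.map_le_iff_le_comap.1 hTU)
    exact Submodule.eq_of_le_of_finrank_le hUK (by omega)
  · rintro rfl
    exact ⟨hAK, hKB, hKrank, hTK⟩

end AuxLemmas

/-- The modular law, condition (2): if `m₀, m₁, m₂` are Hessenberg functions related by
condition (2) at index `i`, then `(1+q)|H(m₁,T)| = q|H(m₀,T)| + |H(m₂,T)|`. -/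
theorem stmt7 (F : Type) [Field F] [Fintype F] (n : ℕ)
    (m₀ m₁ m₂ : ℕ → ℕ) (h₀ : IsHess n m₀) (h₁ : IsHess n m₁) (h₂ : IsHess n m₂)
    (i : ℕ) (hi1 : 1 ≤ i) (hin : i ≤ n - 1)
    (ha : m₁ (i + 1) = m₁ i + 1)
    (hb : ∀ j, 1 ≤ j → j ≤ n → m₁ j ≠ i)
    (hoff : ∀ j, j ≠ i → j ≠ i + 1 → m₀ j = m₁ j ∧ m₂ j = m₁ j)
    (h0i : m₀ i = m₁ i ∧ m₀ (i + 1) = m₁ i)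
    (h2i : m₂ i = m₁ (i + 1) ∧ m₂ (i + 1) = m₁ (i + 1))
    (T : Module.End F (Fin n → F)) :
    (1 + Fintype.card F) * (Hess F n m₁ T).ncard =
      Fintype.card F * (Hess F n m₀ T).ncard + (Hess F n m₂ T).ncard := by
  classical
  set q := Fintype.card F with hq
  have hn2 : 2 ≤ n := by omega
  have hi1n : i + 1 ≤ n := by omega
  have hir : i ≤ m₁ i := (h₁.1 i hi1 (by omega)).1
  have hrne : m₁ i ≠ i := hb i hi1 (by omega)
  have hr1n : m₁ i + 1 ≤ n := by
    have := (h₁.1 (i+1) (by omega) hi1n).2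
    omega
  -- values never equal i
  have hval0 : ∀ j, 1 ≤ j → j ≤ n → m₀ j ≠ i := by
    intro j hj1 hj2
    by_cases hji : j = i
    · subst hji; rw [h0i.1]; exact hb j hj1 hj2
    by_cases hji' : j = i + 1
    · subst hji'; rw [h0i.2]; exact hb i hi1 (by omega)
    · rw [(hoff j hji hji').1]; exact hb j hj1 hj2
  have hval2 : ∀ j, 1 ≤ j → j ≤ n → m₂ j ≠ i := by
    intro j hj1 hj2
    by_cases hji : j = i
    · subst hji; rw [h2i.1, ha]; omega
    by_cases hji' : j = i + 1
    · subst hji'; rw [h2i.2, ha]; omega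
    · rw [(hoff j hji hji').2]; exact hb j hj1 hj2
  have hval1 : ∀ j, 1 ≤ j → j ≤ n → m₁ j ≠ i := hb
  -- pointwise comparisons
  have hle01 : ∀ j, m₀ j ≤ m₁ j := by
    intro j
    by_cases hji : j = i
    · subst hji; exact le_of_eq h0i.1
    by_cases hji' : j = i + 1
    · subst hji'; rw [h0i.2, ha]; omega
    · exact le_of_eq (hoff j hji hji').1
  have hle12 : ∀ j, m₁ j ≤ m₂ j := by
    intro j
    by_cases hji : j = i
    · subst hji; rw [h2i.1, ha]; omega
    by_cases hji' : j = i + 1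
    · subst hji'; exact le_of_eq h2i.2.symm
    · exact le_of_eq (hoff j hji hji').2.symm
  have hm12 : ∀ j, j ≠ i → m₁ j = m₂ j := by
    intro j hj
    by_cases hji' : j = i + 1
    · subst hji'; exact h2i.2.symm
    · exact (hoff j hj hji').2.symm
  -- flag helpers
  have flagMono : ∀ V, IsFlag F n V → Monotone V :=
    fun V hV => monotone_nat_of_le_succ hV.2.2.1
  have flagTop : ∀ V, IsFlag F n V → ∀ j, n ≤ j → V j = ⊤ := by
    intro V hV j hj
    exact le_antisymm le_top (hV.2.1 ▸ flagMono V hV hj)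
  -- finiteness
  have hfinSub : Finite (Submodule F (Fin n → F)) :=
    Finite.of_injective (fun L => (L : Set (Fin n → F))) SetLike.coe_injective
  have hfin : ∀ m : ℕ → ℕ, (Hess F n m T).Finite := by
    intro m
    apply Set.Finite.of_finite_image
      (f := fun V => fun j : Fin (n+1) => V (j : ℕ))
    · exact Set.toFinite _
    · intro V hV V' hV' hEq
      funext j
      by_cases hj : j ≤ n
      · exact congrFun hEq ⟨j, by omega⟩
      · rw [flagTop V hV.1 j (by omega), flagTop V' hV'.1 j (by omega)]
  set f : (ℕ → Submodule F (Fin n → F)) → (ℕ → Submodule F (Fin n → F)) :=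
    fun V => Function.update V i ⊥ with hf
  -- update membership characterization
  have upd_mem : ∀ (m : ℕ → ℕ), (∀ j, 1 ≤ j → j ≤ n → m j ≠ i) →
      ∀ (V : ℕ → Submodule F (Fin n → F)) (U : Submodule F (Fin n → F)), IsFlag F n V →
      (Function.update V i U ∈ Hess F n m T ↔
        (V (i-1) ≤ U ∧ U ≤ V (i+1) ∧ Module.finrank F ↥U = i ∧
         Submodule.map T U ≤ V (m i) ∧
         ∀ j, 1 ≤ j → j ≤ n → j ≠ i → Submodule.map T (V j) ≤ V (m j))) := by
    intro m hne V U hV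
    have hupd : ∀ j, j ≠ i → Function.update V i U j = V j :=
      fun j hj => Function.update_of_ne hj U V
    have hupdi : Function.update V i U i = U := Function.update_self i U V
    constructor
    · rintro ⟨hflag, hcond⟩
      refine ⟨?_, ?_, ?_, ?_, ?_⟩
      · have h := hflag.2.2.1 (i-1)
        rwa [hupd (i-1) (by omega), (by omega : i - 1 + 1 = i), hupdi] at h
      · have h := hflag.2.2.1 i
        rwa [hupdi, hupd (i+1) (by omega)] at h
      · have h := hflag.2.2.2 i (by omega)
        rwa [hupdi] at h
      · have h := hcond i hi1 (by omega)
        rwa [hupdi, hupd (m i) (hne i hi1 (by omega))] at h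
      · intro j hj1 hj2 hj
        have h := hcond j hj1 hj2
        rwa [hupd j hj, hupd (m j) (hne j hj1 hj2)] at h
    · rintro ⟨hU1, hU2, hU3, hU4, hrest⟩
      refine ⟨⟨?_, ?_, ?_, ?_⟩, ?_⟩
      · rw [hupd 0 (by omega)]; exact hV.1
      · rw [hupd n (by omega)]; exact hV.2.1
      · intro j
        by_cases hji : j = i
        · rw [hji, hupdi, hupd (i+1) (by omega)]; exact hU2
        by_cases hji1 : j + 1 = i
        · rw [hupd j hji, hji1, hupdi, (by omega : j = i - 1)]; exact hU1
        · rw [hupd j hji, hupd (j+1) hji1]; exact hV.2.2.1 j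
      · intro j hjn
        by_cases hji : j = i
        · rw [hji, hupdi]; exact hU3
        · rw [hupd j hji]; exact hV.2.2.2 j hjn
      · intro j hj1 hj2
        by_cases hji : j = i
        · rw [hji, hupdi, hupd (m i) (hne i hi1 (by omega))]
          exact hU4
        · rw [hupd j hji, hupd (m j) (hne j hj1 hj2)]; exact hrest j hj1 hj2 hji
  -- fiber description
  have upd_inj : ∀ V : ℕ → Submodule F (Fin n → F),
      Function.Injective (fun U => Function.update V i U) := by
    intro V U U' h
    simpa using congrFun h i
  have fiber_eq : ∀ (m : ℕ → ℕ), (∀ j, 1 ≤ j → j ≤ n → m j ≠ i) →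
      ∀ (V : ℕ → Submodule F (Fin n → F)), IsFlag F n V →
      (∀ j, 1 ≤ j → j ≤ n → j ≠ i → Submodule.map T (V j) ≤ V (m j)) →
      {V' | V' ∈ Hess F n m T ∧ f V' = f V} =
        (fun U => Function.update V i U) ''
          {U | V (i-1) ≤ U ∧ U ≤ V (i+1) ∧ Module.finrank F ↥U = i ∧
            Submodule.map T U ≤ V (m i)} := by
    intro m hne V hV hconds
    ext V'
    simp only [Set.mem_setOf_eq, Set.mem_image]
    constructor
    · rintro ⟨hmem, hfV⟩
      have hagree : ∀ j, j ≠ i → V' j = V j := by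
        intro j hj
        have h := congrFun hfV j
        simp only [hf] at h
        rwa [Function.update_of_ne hj, Function.update_of_ne hj] at h
      have hV'eq : V' = Function.update V i (V' i) := by
        funext j
        by_cases hj : j = i
        · rw [hj, Function.update_self]
        · rw [Function.update_of_ne hj]; exact hagree j hj
      rw [hV'eq] at hmem
      obtain ⟨c1, c2, c3, c4, _⟩ := (upd_mem m hne V (V' i) hV).1 hmem
      exact ⟨V' i, ⟨c1, c2, c3, c4⟩, hV'eq.symm⟩
    · rintro ⟨U, ⟨c1, c2, c3, c4⟩, rfl⟩
      refine ⟨(upd_mem m hne V U hV).2 ⟨c1, c2, c3, c4, hconds⟩, ?_⟩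
      simp only [hf]
      exact Function.update_idem ..
  -- counting the three-condition set
  have count2 : ∀ (V : ℕ → Submodule F (Fin n → F)), IsFlag F n V →
      {U | V (i-1) ≤ U ∧ U ≤ V (i+1) ∧ Module.finrank F ↥U = i}.ncard = q + 1 := by
    intro V hV
    have h1 : finrank F (V (i-1)) = i - 1 := hV.2.2.2 (i-1) (by omega)
    have h2 : finrank F (V (i+1)) = i + 1 := hV.2.2.2 (i+1) hi1n
    have h := between_ncard (V (i-1)) (V (i+1)) (i-1)
      (flagMono V hV (by omega)) h1 (by omega)
    simp only [show i - 1 + 1 = i from by omega] at h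
    exact h
  -- absorbing the fourth condition
  have set_eq_of : ∀ (V : ℕ → Submodule F (Fin n → F)) (Rt : Submodule F (Fin n → F)),
      Submodule.map T (V (i+1)) ≤ Rt →
      {U | V (i-1) ≤ U ∧ U ≤ V (i+1) ∧ Module.finrank F ↥U = i ∧
        Submodule.map T U ≤ Rt} =
      {U | V (i-1) ≤ U ∧ U ≤ V (i+1) ∧ Module.finrank F ↥U = i} := by
    intro V Rt hRt
    ext U
    simp only [Set.mem_setOf_eq]
    exact ⟨fun ⟨a, b, c, _⟩ => ⟨a, b, c⟩,
      fun ⟨a, b, c⟩ => ⟨a, b, c, le_trans (Submodule.map_mono b) hRt⟩⟩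
  have hnonempty3 : ∀ (V : ℕ → Submodule F (Fin n → F)), IsFlag F n V →
      {U | V (i-1) ≤ U ∧ U ≤ V (i+1) ∧ Module.finrank F ↥U = i}.Nonempty := by
    intro V hV
    apply Set.nonempty_of_ncard_ne_zero
    rw [count2 V hV]
    omega
  -- finsets
  set s0 := (hfin m₀).toFinset with hs0
  set s1 := (hfin m₁).toFinset with hs1
  set s2 := (hfin m₂).toFinset with hs2
  have hmem0 : ∀ V, V ∈ s0 ↔ V ∈ Hess F n m₀ T := fun V => (hfin m₀).mem_toFinset
  have hmem1 : ∀ V, V ∈ s1 ↔ V ∈ Hess F n m₁ T := fun V => (hfin m₁).mem_toFinset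
  have hmem2 : ∀ V, V ∈ s2 ↔ V ∈ Hess F n m₂ T := fun V => (hfin m₂).mem_toFinset
  have hsub01 : s0 ⊆ s1 := by
    intro V hV
    rw [hmem0] at hV
    rw [hmem1]
    exact ⟨hV.1, fun j hj1 hj2 => le_trans (hV.2 j hj1 hj2)
      (flagMono V hV.1 (hle01 j))⟩
  have hsub12 : s1 ⊆ s2 := by
    intro V hV
    rw [hmem1] at hV
    rw [hmem2]
    exact ⟨hV.1, fun j hj1 hj2 => le_trans (hV.2 j hj1 hj2)
      (flagMono V hV.1 (hle12 j))⟩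
  set p := s2.image f with hp
  set p0 := s0.image f with hp0
  have hp0p : p0 ⊆ p := Finset.image_subset_image (hsub01.trans hsub12)
  -- generic filter-card = ncard of fiber
  have filt_card : ∀ (m : ℕ → ℕ) (hfm : (Hess F n m T).Finite)
      (V : ℕ → Submodule F (Fin n → F)),
      ((hfm.toFinset).filter fun V' => f V' = f V).card =
        {V' | V' ∈ Hess F n m T ∧ f V' = f V}.ncard := by
    intro m hfm V
    rw [← Set.ncard_coe_finset]
    congr 1
    ext V'
    simp [Set.Finite.mem_toFinset]
  -- Claim A
  have claimA : s2.card = (q + 1) * p.card := by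
    have hfib : ∀ W ∈ p, (s2.filter fun V' => f V' = W).card = q + 1 := by
      intro W hW
      obtain ⟨V, hVs2, rfl⟩ := Finset.mem_image.1 hW
      rw [hmem2] at hVs2
      have hT2 : Submodule.map T (V (i+1)) ≤ V (m₂ i) := by
        have hcond := hVs2.2 (i+1) (by omega) hi1n
        rwa [h2i.2.trans h2i.1.symm] at hcond
      rw [hs2, filt_card m₂ (hfin m₂) V,
        fiber_eq m₂ hval2 V hVs2.1 (fun j hj1 hj2 _ => hVs2.2 j hj1 hj2),
        Set.ncard_image_of_injective _ (upd_inj V),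
        set_eq_of V (V (m₂ i)) hT2, count2 V hVs2.1]
    calc s2.card = ∑ W ∈ p, (s2.filter fun V' => f V' = W).card :=
        Finset.card_eq_sum_card_fiberwise (fun V hV => Finset.mem_image_of_mem f hV)
      _ = ∑ _W ∈ p, (q+1) := Finset.sum_congr rfl hfib
      _ = (q+1) * p.card := by rw [Finset.sum_const, smul_eq_mul, mul_comm]
  -- Claim B
  have claimB : s0.card = (q + 1) * p0.card := by
    have hfib : ∀ W ∈ p0, (s0.filter fun V' => f V' = W).card = q + 1 := by
      intro W hW
      obtain ⟨V, hVs0, rfl⟩ := Finset.mem_image.1 hW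
      rw [hmem0] at hVs0
      have hT0 : Submodule.map T (V (i+1)) ≤ V (m₀ i) := by
        have hcond := hVs0.2 (i+1) (by omega) hi1n
        rwa [h0i.2.trans h0i.1.symm] at hcond
      rw [hs0, filt_card m₀ (hfin m₀) V,
        fiber_eq m₀ hval0 V hVs0.1 (fun j hj1 hj2 _ => hVs0.2 j hj1 hj2),
        Set.ncard_image_of_injective _ (upd_inj V),
        set_eq_of V (V (m₀ i)) hT0, count2 V hVs0.1]
    calc s0.card = ∑ W ∈ p0, (s0.filter fun V' => f V' = W).card :=
        Finset.card_eq_sum_card_fiberwise (fun V hV => Finset.mem_image_of_mem f hV)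
      _ = ∑ _W ∈ p0, (q+1) := Finset.sum_congr rfl hfib
      _ = (q+1) * p0.card := by rw [Finset.sum_const, smul_eq_mul, mul_comm]
  -- kernel singleton description
  have hsing : ∀ (V : ℕ → Submodule F (Fin n → F)), V ∈ Hess F n m₂ T →
      ¬ Submodule.map T (V (i+1)) ≤ V (m₁ i) →
      {U | V (i-1) ≤ U ∧ U ≤ V (i+1) ∧ Module.finrank F ↥U = i ∧
        Submodule.map T U ≤ V (m₁ i)} =
      {V (i+1) ⊓ Submodule.comap T (V (m₁ i))} := by
    intro V hV hnc
    have hTA : Submodule.map T (V (i-1)) ≤ V (m₁ i) := by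
      by_cases hi' : i = 1
      · rw [hi', (by omega : 1 - 1 = 0), hV.1.1, Submodule.map_bot]
        exact bot_le
      · have hcond := hV.2 (i-1) (by omega) (by omega)
        have hmle : m₂ (i-1) ≤ m₁ i := by
          have he : m₂ (i-1) = m₁ (i-1) := (hoff (i-1) (by omega) (by omega)).2
          have h2 := h₁.2 (i-1) i (by omega) (by omega) (by omega)
          omega
        exact le_trans hcond (flagMono V hV.1 hmle)
    have hTB : Submodule.map T (V (i+1)) ≤ V (m₁ i + 1) := by
      have hcond := hV.2 (i+1) (by omega) hi1n
      rwa [h2i.2, ha] at hcond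
    have h := kernel_singleton T (V (i-1)) (V (i+1)) (V (m₁ i)) (V (m₁ i + 1)) (i-1)
      (flagMono V hV.1 (by omega)) (hV.1.2.2.2 (i-1) (by omega))
      (by rw [hV.1.2.2.2 (i+1) hi1n]; omega)
      hTA hTB (flagMono V hV.1 (by omega))
      (by rw [hV.1.2.2.2 (m₁ i) (by omega), hV.1.2.2.2 (m₁ i + 1) (by omega)])
      hnc
    simpa only [show i - 1 + 1 = i from by omega] using h
  have nonempty4 : ∀ (V : ℕ → Submodule F (Fin n → F)), V ∈ Hess F n m₂ T →
      {U | V (i-1) ≤ U ∧ U ≤ V (i+1) ∧ Module.finrank F ↥U = i ∧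
        Submodule.map T U ≤ V (m₁ i)}.Nonempty := by
    intro V hV
    by_cases hc : Submodule.map T (V (i+1)) ≤ V (m₁ i)
    · rw [set_eq_of V _ hc]
      exact hnonempty3 V hV.1
    · rw [hsing V hV hc]
      exact Set.singleton_nonempty _
  -- Claim C
  have claimC : s1.image f = p := by
    apply Finset.Subset.antisymm
    · exact Finset.image_subset_image hsub12
    · intro W hW
      obtain ⟨V, hVs2, rfl⟩ := Finset.mem_image.1 hW
      rw [hmem2] at hVs2
      obtain ⟨U, c1, c2, c3, c4⟩ := nonempty4 V hVs2
      refine Finset.mem_image.2 ⟨Function.update V i U, ?_, ?_⟩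
      · rw [hmem1]
        exact (upd_mem m₁ hval1 V U hVs2.1).2 ⟨c1, c2, c3, c4,
          fun j hj1 hj2 hj => by rw [hm12 j hj]; exact hVs2.2 j hj1 hj2⟩
      · simp only [hf]
        exact Function.update_idem ..
  -- membership in p0
  have memp0_iff : ∀ (V : ℕ → Submodule F (Fin n → F)), V ∈ Hess F n m₂ T →
      (f V ∈ p0 ↔ Submodule.map T (V (i+1)) ≤ V (m₁ i)) := by
    intro V hV
    constructor
    · intro hW
      obtain ⟨V', hV's0, hfeq⟩ := Finset.mem_image.1 hW
      rw [hmem0] at hV's0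
      have hagree : ∀ j, j ≠ i → V' j = V j := by
        intro j hj
        have h := congrFun hfeq j
        simp only [hf] at h
        rwa [Function.update_of_ne hj, Function.update_of_ne hj] at h
      have hcond := hV's0.2 (i+1) (by omega) hi1n
      rw [hagree (i+1) (by omega), hagree (m₀ (i+1)) (hval0 (i+1) (by omega) hi1n)] at hcond
      rwa [h0i.2] at hcond
    · intro hc
      obtain ⟨U, c1, c2, c3⟩ := hnonempty3 V hV.1
      have hmem : Function.update V i U ∈ Hess F n m₀ T := by
        apply (upd_mem m₀ hval0 V U hV.1).2
        refine ⟨c1, c2, c3, ?_, ?_⟩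
        · rw [h0i.1]
          exact le_trans (Submodule.map_mono c2) hc
        · intro j hj1 hj2 hj
          by_cases hji' : j = i + 1
          · rw [hji', h0i.2]
            exact hc
          · rw [(hoff j hj hji').1, hm12 j hj]
            exact hV.2 j hj1 hj2
      have heq : f (Function.update V i U) = f V := by
        simp only [hf]
        exact Function.update_idem ..
      rw [← heq]
      exact Finset.mem_image_of_mem f ((hmem0 _).2 hmem)
  -- Claim D
  have claimD : s1.card = p.card + q * p0.card := by
    have hmapsto : ∀ V ∈ s1, f V ∈ p := by
      intro V hV
      rw [← claimC]
      exact Finset.mem_image_of_mem f hV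
    rw [Finset.card_eq_sum_card_fiberwise hmapsto]
    have hfib : ∀ W ∈ p, (s1.filter fun V' => f V' = W).card =
        if W ∈ p0 then q + 1 else 1 := by
      intro W hW
      obtain ⟨V, hVs2, rfl⟩ := Finset.mem_image.1 hW
      rw [hmem2] at hVs2
      have hbase : (s1.filter fun V' => f V' = f V).card =
          {U | V (i-1) ≤ U ∧ U ≤ V (i+1) ∧ Module.finrank F ↥U = i ∧
            Submodule.map T U ≤ V (m₁ i)}.ncard := by
        rw [hs1, filt_card m₁ (hfin m₁) V,
          fiber_eq m₁ hval1 V hVs2.1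
            (fun j hj1 hj2 hj => by rw [hm12 j hj]; exact hVs2.2 j hj1 hj2),
          Set.ncard_image_of_injective _ (upd_inj V)]
      by_cases hc : Submodule.map T (V (i+1)) ≤ V (m₁ i)
      · rw [if_pos ((memp0_iff V hVs2).2 hc), hbase, set_eq_of V _ hc, count2 V hVs2.1]
      · rw [if_neg (fun hW0 => hc ((memp0_iff V hVs2).1 hW0)), hbase,
          hsing V hVs2 hc, Set.ncard_singleton]
    rw [Finset.sum_congr rfl hfib]
    have hsplit : ∀ W ∈ p, (if W ∈ p0 then q + 1 else 1) = 1 + (if W ∈ p0 then q else 0) := by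
      intro W _
      split <;> omega
    rw [Finset.sum_congr rfl hsplit, Finset.sum_add_distrib, Finset.sum_const,
      Finset.sum_ite_mem, Finset.inter_eq_right.2 hp0p, Finset.sum_const]
    simp [mul_comm]
  -- conclusion
  rw [Set.ncard_eq_toFinset_card _ (hfin m₁), Set.ncard_eq_toFinset_card _ (hfin m₀),
    Set.ncard_eq_toFinset_card _ (hfin m₂), ← hs0, ← hs1, ← hs2, claimD, claimB, claimA]
  ring
end

section
/- Let λ=(λ_1,…,λ_ℓ) be a partition of n with partial sums α_i = λ_1+⋯+λ_i, and let k_λ be the Hessenberg function whose value is α_i on each j with α_{i-1} < j ≤ α_i. Then for any linear operator T on F_q^n, the map sending a complete flag in H(k_λ,T) to the subflag (V_{α_1}, V_{α_2}, …, V_{α_ℓ}) is a surjection onto the set of λ-flags of T-invariant subspaces, and every fiber has cardinality [λ]_q! := ∏_{i=1}^ℓ [λ_i]_q!. -/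
/-- Partial sums `α t = λ 1 + ⋯ + λ t` of a sequence `λ : Fin ℓ → ℕ`. -/
def psum (ℓ : ℕ) (lam : Fin ℓ → ℕ) (t : ℕ) : ℕ :=
  ∑ j ∈ Finset.range t, if h : j < ℓ then lam ⟨j, h⟩ else 0

/-- The complete-type Hessenberg function `k_λ`, taking the value `α i` on each `j`
with `α (i-1) < j ≤ α i`. -/
noncomputable def kLam (ℓ : ℕ) (lam : Fin ℓ → ℕ) : ℕ → ℕ :=
  fun j => psum ℓ lam (sInf {t | j ≤ psum ℓ lam t})

/-- A `λ`-flag of `T`-invariant subspaces: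
`0 = W 0 ⊆ W 1 ⊆ ⋯ ⊆ W ℓ = F^n` with `dim (W i) = λ 1 + ⋯ + λ i`
(equivalently `dim (W i / W (i-1)) = λ i`) and `T (W i) ⊆ W i`. -/
def IsInvLamFlag (F : Type) [Field F] (n : ℕ) (ℓ : ℕ) (lam : Fin ℓ → ℕ)
    (T : Module.End F (Fin n → F)) (W : Fin (ℓ + 1) → Submodule F (Fin n → F)) : Prop :=
  W 0 = ⊥ ∧ W (Fin.last ℓ) = ⊤ ∧ Monotone W ∧
  (∀ i : Fin (ℓ + 1), Module.finrank F ↥(W i) = psum ℓ lam i) ∧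
  ∀ i, (W i).map T ≤ W i

namespace Stmt9Aux


open Module Submodule Finset

/-- partial sums of a ℕ-indexed sequence -/
def PS (g : ℕ → ℕ) (t : ℕ) : ℕ := ∑ j ∈ Finset.range t, g j

lemma PS_mono (g : ℕ → ℕ) : Monotone (PS g) := fun _ _ h =>
  Finset.sum_le_sum_of_subset (Finset.range_subset_range.mpr h)

lemma PS_succ' (g : ℕ → ℕ) (t : ℕ) : PS g (t + 1) = g 0 + PS (fun j => g (j + 1)) t := by
  simp only [PS, Finset.sum_range_succ']; ring

lemma qFact_succ (q d : ℕ) : qFact q (d + 1) = qInt q (d + 1) * qFact q d := by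
  simp only [qFact, Finset.prod_range_succ]; ring

lemma qInt_mul (q : ℕ) (hq : 1 ≤ q) (m : ℕ) : (q - 1) * qInt q m + 1 = q ^ m := by
  obtain ⟨k, rfl⟩ : ∃ k, q = k + 1 := ⟨q - 1, by omega⟩
  induction m with
  | zero => simp [qInt]
  | succ m ih =>
    have h1 : qInt (k+1) (m+1) = qInt (k+1) m + (k+1) ^ m := by
      simp [qInt, Finset.sum_range_succ]
    have h2 : (k + 1 - 1) = k := by omega
    rw [h2] at ih ⊢
    rw [h1, pow_succ, ← ih]; ring

variable {F : Type} [Field F] [Fintype F] {n : ℕ}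

lemma ncard_sigma {ι : Type} [Fintype ι] (β : ι → Type) [∀ i, Finite (β i)] :
    Nat.card (Σ i, β i) = ∑ i, Nat.card (β i) := by
  haveI : ∀ i, Fintype (β i) := fun i => Fintype.ofFinite _
  simp [Nat.card_eq_fintype_card, Fintype.card_sigma]

lemma finite_submodule : Finite (Submodule F (Fin n → F)) :=
  Finite.of_injective _ SetLike.coe_injective

lemma card_submodule (U : Submodule F (Fin n → F)) :
    Nat.card U = Fintype.card F ^ finrank F U := by
  haveI : Fintype U := Fintype.ofFinite _
  rw [Nat.card_eq_fintype_card]; exact card_eq_pow_finrank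

lemma card_sdiff_submodule (A U : Submodule F (Fin n → F)) (h : A ≤ U) :
    Nat.card {x : Fin n → F // x ∈ U ∧ x ∉ A}
      = Fintype.card F ^ finrank F U - Fintype.card F ^ finrank F A := by
  have e : {x : Fin n → F // x ∈ U ∧ x ∉ A} ≃ ↥((U : Set (Fin n → F)) \ (A : Set (Fin n → F))) :=
    Equiv.subtypeEquivRight (fun x => by simp [Set.mem_diff])
  rw [Nat.card_congr e, Nat.card_coe_set_eq, Set.ncard_diff (by exact_mod_cast h)]
  rw [← Nat.card_coe_set_eq, ← Nat.card_coe_set_eq]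
  rw [show Nat.card ↥(U : Set (Fin n → F)) = Nat.card U from rfl,
      show Nat.card ↥(A : Set (Fin n → F)) = Nat.card A from rfl,
      card_submodule, card_submodule]

lemma card_covers (A B : Submodule F (Fin n → F)) (hAB : A ≤ B) (d : ℕ)
    (hr : finrank F B = finrank F A + (d + 1)) :
    Nat.card {U : Submodule F (Fin n → F) // A ≤ U ∧ U ≤ B ∧ finrank F U = finrank F A + 1}
      = qInt (Fintype.card F) (d + 1) := by
  classical
  set q := Fintype.card F with hqdef
  have hq : 2 ≤ q := Fintype.one_lt_card
  set a := finrank F A with ha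
  set X := {x : Fin n → F // x ∈ B ∧ x ∉ A} with hX
  set S := {U : Submodule F (Fin n → F) // A ≤ U ∧ U ≤ B ∧ finrank F U = a + 1} with hS
  have hspan : ∀ x : X, A ≤ A ⊔ span F {x.1} ∧ (A ⊔ span F {x.1}) ≤ B ∧
      finrank F ↥(A ⊔ span F {x.1}) = a + 1 := by
    rintro ⟨x, hxB, hxA⟩
    dsimp only
    refine ⟨le_sup_left, sup_le hAB (span_le.mpr (by simpa using hxB)), ?_⟩
    have hxm : x ∈ A ⊔ span F {x} := Submodule.mem_sup_right (subset_span rfl)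
    have h1 : A < A ⊔ span F {x} :=
      lt_of_le_of_ne le_sup_left (fun he => hxA (by rw [he]; exact hxm))
    have hlow : a < finrank F ↥(A ⊔ span F {x}) := Submodule.finrank_lt_finrank_of_lt h1
    have hx0 : x ≠ 0 := fun h0 => hxA (h0 ▸ A.zero_mem)
    have hup := Submodule.finrank_sup_add_finrank_inf_eq A (span F {x})
    rw [finrank_span_singleton hx0] at hup
    omega
  let φ : X → S := fun x => ⟨A ⊔ span F {x.1}, hspan x⟩
  have fib : ∀ U : S, {x : X // φ x = U} ≃ {x : Fin n → F // x ∈ U.1 ∧ x ∉ A} := by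
    intro U
    refine ⟨fun x => ⟨x.1.1, ?_, x.1.2.2⟩, fun y => ⟨⟨y.1, U.2.2.1 y.2.1, y.2.2⟩, ?_⟩, ?_, ?_⟩
    · have h1 : (φ x.1).1 = U.1 := congrArg Subtype.val x.2
      have h2 : x.1.1 ∈ (φ x.1).1 := Submodule.mem_sup_right (subset_span rfl)
      rwa [h1] at h2
    · apply Subtype.ext
      refine Submodule.eq_of_le_of_finrank_eq (sup_le U.2.1 (span_le.mpr (by simpa using y.2.1))) ?_
      rw [(hspan ⟨y.1, U.2.2.1 y.2.1, y.2.2⟩).2.2, U.2.2.2]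
    · intro x; apply Subtype.ext; apply Subtype.ext; rfl
    · intro y; apply Subtype.ext; rfl
  haveI : Finite (Submodule F (Fin n → F)) := finite_submodule
  haveI : Fintype S := Fintype.ofFinite _
  have key : ∑ U : S, Nat.card {x : X // φ x = U} = Nat.card X := by
    rw [← ncard_sigma]; exact Nat.card_congr (Equiv.sigmaFiberEquiv φ)
  have hf : ∀ U : S, Nat.card {x : X // φ x = U} = q ^ (a + 1) - q ^ a := fun U => by
    rw [Nat.card_congr (fib U)]
    have := card_sdiff_submodule A U.1 U.2.1
    rw [U.2.2.2] at this; exact this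
  have hXcard : Nat.card X = q ^ (a + (d + 1)) - q ^ a := by
    have := card_sdiff_submodule A B hAB
    rw [hr] at this; exact this
  rw [Finset.sum_congr rfl (fun U _ => hf U), Finset.sum_const, Finset.card_univ, smul_eq_mul,
    hXcard] at key
  -- arithmetic
  set I := qInt q (d + 1) with hI
  have e1 : q ^ (a + 1) - q ^ a = q ^ a * (q - 1) := by
    have h1 : q ^ (a + 1) = q ^ a * (q - 1) + q ^ a := by
      rw [pow_succ]
      have hq1 : q = (q - 1) + 1 := by omega
      calc q ^ a * q = q ^ a * ((q - 1) + 1) := by rw [← hq1]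
        _ = q ^ a * (q - 1) + q ^ a := by ring
    rw [h1, Nat.add_sub_cancel]
  have e2 : q ^ (a + (d + 1)) - q ^ a = q ^ a * (q - 1) * I := by
    have h1 : q ^ (a + (d + 1)) = q ^ a * (q - 1) * I + q ^ a := by
      rw [pow_add, ← qInt_mul q (by omega) (d + 1), ← hI]; ring
    rw [h1, Nat.add_sub_cancel]
  rw [e1, e2] at key
  have hpos : 0 < q ^ a * (q - 1) := by
    have := pow_pos (show 0 < q by omega) a
    have : 0 < q - 1 := by omega
    positivity
  have : Fintype.card S = I := by
    apply Nat.eq_of_mul_eq_mul_right hpos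
    rw [key]; ring
  rw [Nat.card_eq_fintype_card, this]


section
open Module Submodule Finset

variable {F : Type} [Field F] [Fintype F] {n : ℕ}

/-- Chains from `A` to `B` of length `d`, encoded as `ℕ`-indexed families that are
constant `B` beyond `d`. -/
def ChainS (A B : Submodule F (Fin n → F)) (d : ℕ) : Set (ℕ → Submodule F (Fin n → F)) :=
  {c | c 0 = A ∧ c d = B ∧ (∀ j, c j ≤ c (j + 1)) ∧
    ∀ j, finrank F (c j) = finrank F A + min j d}

lemma chainS_frozen {A B : Submodule F (Fin n → F)} {d : ℕ} {c : ℕ → Submodule F (Fin n → F)}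
    (hc : c ∈ ChainS A B d) : ∀ j, d ≤ j → c j = B := by
  obtain ⟨h0, hd, hstep, hrk⟩ := hc
  intro j hj
  have hmono := monotone_nat_of_le_succ hstep
  have h1 : c d = c j := Submodule.eq_of_le_of_finrank_eq (hmono hj)
    (by rw [hrk j, hrk d]; omega)
  rw [← h1, hd]

lemma finite_of_frozen (S : Set (ℕ → Submodule F (Fin n → F))) (N : ℕ)
    (h : ∀ c ∈ S, ∀ j, N ≤ j → c j = c N) : Finite ↥S := by
  haveI : Finite (Submodule F (Fin n → F)) := finite_submodule
  apply Finite.of_injective (fun c : ↥S => fun j : Fin (N + 1) => c.1 j)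
  intro c c' he
  apply Subtype.ext; funext j
  rcases le_or_gt j N with hj | hj
  · exact congrFun he ⟨j, by omega⟩
  · rw [h c.1 c.2 j (by omega), h c'.1 c'.2 j (by omega)]
    exact congrFun he ⟨N, by omega⟩

lemma finite_chainS (A B : Submodule F (Fin n → F)) (d : ℕ) : Finite ↥(ChainS A B d) :=
  finite_of_frozen _ d (fun c hc j hj => by
    rw [chainS_frozen hc j hj, chainS_frozen hc d le_rfl])

lemma chain_card : ∀ (d : ℕ) (A B : Submodule F (Fin n → F)), A ≤ B →
    finrank F B = finrank F A + d →
    Nat.card ↥(ChainS A B d) = qFact (Fintype.card F) d := by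
  intro d
  induction d with
  | zero =>
    intro A B hle hr
    have hAB : A = B := Submodule.eq_of_le_of_finrank_eq hle (by omega)
    have hset : ChainS A B 0 = {fun _ => A} := by
      ext c
      simp only [ChainS, Set.mem_setOf_eq, Set.mem_singleton_iff]
      constructor
      · rintro ⟨h0, _, hstep, hrk⟩
        funext j
        have hmono := monotone_nat_of_le_succ hstep
        have h1 : c 0 = c j := Submodule.eq_of_le_of_finrank_eq (hmono (Nat.zero_le j))
          (by rw [hrk j, hrk 0]; omega)
        rw [← h1, h0]
      · rintro rfl
        exact ⟨rfl, hAB, fun _ => le_rfl, fun j => by simp⟩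
    rw [hset, Nat.card_coe_set_eq, Set.ncard_singleton]
    simp [qFact]
  | succ d ih =>
    intro A B hle hr
    classical
    set q := Fintype.card F with hqdef
    haveI : Finite (Submodule F (Fin n → F)) := finite_submodule
    set S := {U : Submodule F (Fin n → F) // A ≤ U ∧ U ≤ B ∧ finrank F U = finrank F A + 1}
      with hS
    haveI : Fintype S := Fintype.ofFinite _
    haveI : Finite ↥(ChainS A B (d + 1)) := finite_chainS A B (d + 1)
    have hmem : ∀ c : ↥(ChainS A B (d + 1)),
        A ≤ c.1 1 ∧ c.1 1 ≤ B ∧ finrank F (c.1 1) = finrank F A + 1 := fun c => by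
      obtain ⟨h0, hd, hstep, hrk⟩ := c.2
      refine ⟨le_trans (le_of_eq h0.symm) (hstep 0), ?_, ?_⟩
      · have h1 := (monotone_nat_of_le_succ hstep) (show 1 ≤ d + 1 by omega)
        rwa [hd] at h1
      · rw [hrk 1]; omega
    set Φ : ↥(ChainS A B (d + 1)) → S := fun c => ⟨c.1 1, hmem c⟩ with hΦ
    have fib : ∀ U : S, {c : ↥(ChainS A B (d + 1)) // Φ c = U} ≃ ↥(ChainS U.1 B d) := by
      intro U
      refine ⟨fun c => ⟨fun j => c.1.1 (j + 1), ?_⟩,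
        fun c => ⟨⟨fun j => if j = 0 then A else c.1 (j - 1), ?_⟩, ?_⟩, ?_, ?_⟩
      · obtain ⟨h0, hd, hstep, hrk⟩ := c.1.2
        have hU : c.1.1 1 = U.1 := congrArg Subtype.val c.2
        have hUr : finrank F ↥U.1 = finrank F A + 1 := U.2.2.2
        refine ⟨hU, hd, fun j => hstep (j + 1), fun j => ?_⟩
        show finrank F ↥(c.1.1 (j + 1)) = finrank F ↥U.1 + min j d
        have := hrk (j + 1); omega
      · obtain ⟨h0, hd, hstep, hrk⟩ := c.2
        have hUr : finrank F ↥U.1 = finrank F A + 1 := U.2.2.2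
        refine ⟨by simp, ?_, ?_, ?_⟩
        · show (if d + 1 = 0 then A else c.1 (d + 1 - 1)) = B
          rw [if_neg (Nat.succ_ne_zero d), Nat.add_sub_cancel]; exact hd
        · intro j
          show (if j = 0 then A else c.1 (j - 1)) ≤ (if j + 1 = 0 then A else c.1 (j + 1 - 1))
          rcases Nat.eq_zero_or_pos j with rfl | hj
          · rw [if_pos rfl, if_neg (Nat.succ_ne_zero 0)]
            show A ≤ c.1 0
            rw [h0]; exact U.2.1
          · rw [if_neg (by omega), if_neg (by omega)]
            have := hstep (j - 1)
            have he : j - 1 + 1 = j + 1 - 1 := by omega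
            rwa [he] at this
        · intro j
          show finrank F ↥(if j = 0 then A else c.1 (j - 1)) = finrank F ↥A + min j (d + 1)
          rcases Nat.eq_zero_or_pos j with rfl | hj
          · simp
          · rw [if_neg (by omega)]
            have h1 := hrk (j - 1)
            rw [h1, hUr]
            omega
      · apply Subtype.ext
        show (if (1:ℕ) = 0 then A else c.1 (1 - 1)) = U.1
        have h0 : c.1 0 = U.1 := c.2.1
        rw [if_neg one_ne_zero]; exact h0
      · rintro ⟨c, hc⟩
        apply Subtype.ext; apply Subtype.ext
        funext j
        simp only
        rcases Nat.eq_zero_or_pos j with rfl | hj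
        · rw [if_pos rfl, c.2.1]
        · rw [if_neg (by omega)]
          exact congrArg c.1 (by omega : j - 1 + 1 = j)
      · rintro ⟨c, hc⟩
        apply Subtype.ext
        funext j
        simp only [Nat.add_sub_cancel, if_neg (Nat.succ_ne_zero j)]
    calc Nat.card ↥(ChainS A B (d + 1))
        = Nat.card (Σ U : S, {c : ↥(ChainS A B (d + 1)) // Φ c = U}) :=
          (Nat.card_congr (Equiv.sigmaFiberEquiv Φ)).symm
      _ = ∑ U : S, Nat.card {c : ↥(ChainS A B (d + 1)) // Φ c = U} := ncard_sigma _
      _ = ∑ _U : S, qFact q d := Finset.sum_congr rfl (fun U _ => by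
          rw [Nat.card_congr (fib U)]
          exact ih U.1 B U.2.2.1 (by have := U.2.2.2; omega))
      _ = Fintype.card S * qFact q d := by
          rw [Finset.sum_const, Finset.card_univ, smul_eq_mul]
      _ = qInt q (d + 1) * qFact q d := by
          rw [← Nat.card_eq_fintype_card, card_covers A B hle d hr]
      _ = qFact q (d + 1) := (qFact_succ q d).symm

end

section
open Module Submodule Finset

variable {F : Type} [Field F] [Fintype F] {n : ℕ}

/-- Complete chains refining a given flag `W` with jump positions the partial sums of `g`. -/
def RefS (W : ℕ → Submodule F (Fin n → F)) (g : ℕ → ℕ) (L : ℕ) :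
    Set (ℕ → Submodule F (Fin n → F)) :=
  {c | c 0 = W 0 ∧ (∀ j, c j ≤ c (j + 1)) ∧
    (∀ j, finrank F (c j) = finrank F (W 0) + min j (PS g L)) ∧
    ∀ t, t ≤ L → c (PS g t) = W t}

lemma finite_refS (W : ℕ → Submodule F (Fin n → F)) (g : ℕ → ℕ) (L : ℕ) :
    Finite ↥(RefS W g L) := by
  apply finite_of_frozen _ (PS g L)
  rintro c ⟨h0, hstep, hrk, hval⟩ j hj
  exact (Submodule.eq_of_le_of_finrank_eq ((monotone_nat_of_le_succ hstep) hj)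
    (by rw [hrk j, hrk (PS g L)]; omega)).symm

lemma refS_card : ∀ (L : ℕ) (g : ℕ → ℕ) (W : ℕ → Submodule F (Fin n → F)),
    (∀ i, i < L → 0 < g i) → (∀ t, t < L → W t ≤ W (t + 1)) →
    (∀ t, t ≤ L → finrank F (W t) = finrank F (W 0) + PS g t) →
    Nat.card ↥(RefS W g L) = ∏ i ∈ Finset.range L, qFact (Fintype.card F) (g i) := by
  intro L
  induction L with
  | zero =>
    intro g W _ _ _
    have hset : RefS W g 0 = {fun _ => W 0} := by
      ext c
      simp only [RefS, Set.mem_setOf_eq, Set.mem_singleton_iff]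
      constructor
      · rintro ⟨h0, hstep, hrk, _⟩
        funext j
        have h1 : c 0 = c j := Submodule.eq_of_le_of_finrank_eq
          ((monotone_nat_of_le_succ hstep) (Nat.zero_le j))
          (by rw [hrk j, hrk 0]; simp [PS])
        rw [← h1, h0]
      · rintro rfl
        exact ⟨rfl, fun _ => le_rfl, fun j => by simp [PS], fun t ht => by
          simp at ht; subst ht; simp [PS]⟩
    rw [hset, Nat.card_coe_set_eq, Set.ncard_singleton]
    simp
  | succ L ih =>
    intro g W hpos hstep hrk
    classical
    set q := Fintype.card F with hqdef
    set a := g 0 with hadef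
    set g' : ℕ → ℕ := fun j => g (j + 1) with hg'
    set W' : ℕ → Submodule F (Fin n → F) := fun t => W (t + 1) with hW'
    have hPS : ∀ t, PS g (t + 1) = a + PS g' t := fun t => PS_succ' g t
    have ha1 : PS g 1 = a := by simp [PS, hadef]
    have hr0 : finrank F (W 1) = finrank F (W 0) + a := by
      have := hrk 1 (by omega); rwa [ha1] at this
    have hle01 : W 0 ≤ W 1 := hstep 0 (by omega)
    -- the splitting equivalence
    have E : ↥(RefS W g (L + 1)) ≃ ↥(ChainS (W 0) (W 1) a) × ↥(RefS W' g' L) := by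
      refine ⟨fun c => (⟨fun j => c.1 (min j a), ?_⟩, ⟨fun j => c.1 (a + j), ?_⟩),
        fun p => ⟨fun j => if j ≤ a then p.1.1 j else p.2.1 (j - a), ?_⟩, ?_, ?_⟩
      · obtain ⟨h0, hst, hrkc, hval⟩ := c.2
        have hmono := monotone_nat_of_le_succ hst
        refine ⟨by simpa using h0, ?_, fun j => hmono (by omega), fun j => ?_⟩
        · show c.1 (min a a) = W 1
          rw [min_self, ← ha1]; exact hval 1 (by omega)
        · show finrank F (c.1 (min j a)) = finrank F (W 0) + min j a
          rw [hrkc (min j a)]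
          have haL : a ≤ PS g (L + 1) := by
            rw [hPS L]; omega
          omega
      · obtain ⟨h0, hst, hrkc, hval⟩ := c.2
        refine ⟨?_, fun j => ?_, fun j => ?_, fun t ht => ?_⟩
        · have h1 := hval 1 (by omega)
          rw [ha1] at h1
          show c.1 (a + 0) = W' 0
          simpa [hW'] using h1
        · show c.1 (a + j) ≤ c.1 (a + (j + 1))
          have : a + j + 1 = a + (j + 1) := by omega
          rw [← this]; exact hst (a + j)
        · show finrank F (c.1 (a + j)) = finrank F (W' 0) + min j (PS g' L)
          rw [hrkc (a + j)]
          have h1 : finrank F (W' 0) = finrank F (W 0) + a := hr0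
          have h2 : PS g (L + 1) = a + PS g' L := hPS L
          omega
        · show c.1 (a + PS g' t) = W' t
          rw [← hPS t]
          exact hval (t + 1) (by omega)
      · -- membership of the glued chain
        obtain ⟨c1, hc1⟩ := p.1
        obtain ⟨c2, hc2⟩ := p.2
        obtain ⟨h10, h1d, h1st, h1rk⟩ := hc1
        obtain ⟨h20, h2st, h2rk, h2val⟩ := hc2
        have h2' : PS g (L + 1) = a + PS g' L := hPS L
        refine ⟨?_, fun j => ?_, fun j => ?_, fun t ht => ?_⟩
        · show (if 0 ≤ a then c1 0 else _) = W 0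
          rw [if_pos (Nat.zero_le a)]; exact h10
        · show (if j ≤ a then c1 j else c2 (j - a)) ≤ (if j + 1 ≤ a then c1 (j + 1) else c2 (j + 1 - a))
          rcases le_or_gt (j + 1) a with h | h
          · rw [if_pos (by omega), if_pos h]; exact h1st j
          · rcases le_or_gt j a with h' | h'
            · rw [if_pos h', if_neg (by omega)]
              have hja : j = a := by omega
              subst hja
              have he : a + 1 - a = 1 := by omega
              have hW10 : W 1 = W' 0 := by rw [hW']
              rw [h1d, he, hW10, ← h20]
              exact h2st 0
            · rw [if_neg (by omega), if_neg (by omega)]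
              have : j + 1 - a = (j - a) + 1 := by omega
              rw [this]; exact h2st (j - a)
        · show finrank F ↥(if j ≤ a then c1 j else c2 (j - a)) = finrank F (W 0) + min j (PS g (L + 1))
          rcases le_or_gt j a with h | h
          · rw [if_pos h, h1rk j]
            have : a ≤ PS g (L + 1) := by omega
            omega
          · rw [if_neg (by omega), h2rk (j - a)]
            have h1 : finrank F (W' 0) = finrank F (W 0) + a := hr0
            omega
        · show (if PS g t ≤ a then c1 (PS g t) else c2 (PS g t - a)) = W t
          rcases Nat.eq_zero_or_pos t with rfl | ht0
          · rw [if_pos (by simp [PS]), show PS g 0 = 0 from rfl]; exact h10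
          · obtain ⟨s, rfl⟩ : ∃ s, t = s + 1 := ⟨t - 1, by omega⟩
            rcases Nat.eq_zero_or_pos s with rfl | hs0
            · rw [ha1, if_pos le_rfl, h1d]
            · have hPSpos : 0 < PS g' s := by
                have : g' 0 ≤ PS g' s := by
                  have : PS g' s = ∑ j ∈ Finset.range s, g' j := rfl
                  calc g' 0 = ∑ j ∈ Finset.range 1, g' j := by simp [PS]
                    _ ≤ _ := Finset.sum_le_sum_of_subset (Finset.range_subset_range.mpr hs0)
                have hg0 : 0 < g' 0 := hpos 1 (by omega)
                omega
              rw [hPS s, if_neg (by omega)]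
              have : a + PS g' s - a = PS g' s := by omega
              rw [this]
              exact h2val s (by omega)
      · -- left inverse
        intro c
        apply Subtype.ext
        funext j
        show (if j ≤ a then c.1 (min j a) else c.1 (a + (j - a))) = c.1 j
        rcases le_or_gt j a with h | h
        · rw [if_pos h, min_eq_left h]
        · rw [if_neg (by omega)]
          exact congrArg c.1 (by omega : a + (j - a) = j)
      · -- right inverse
        rintro ⟨⟨c1, hc1⟩, ⟨c2, hc2⟩⟩
        have ha0 : 0 < a := hpos 0 (by omega)
        have hfr : ∀ j, a ≤ j → c1 j = W 1 := fun j hj => chainS_frozen hc1 j hj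
        refine Prod.ext ?_ ?_
        · apply Subtype.ext
          funext j
          show (if min j a ≤ a then c1 (min j a) else _) = c1 j
          rw [if_pos (min_le_right j a)]
          rcases le_or_gt j a with h | h
          · rw [min_eq_left h]
          · rw [min_eq_right (by omega), hc1.2.1, hfr j (by omega)]
        · apply Subtype.ext
          funext j
          show (if a + j ≤ a then c1 (a + j) else c2 (a + j - a)) = c2 j
          rcases Nat.eq_zero_or_pos j with rfl | hj
          · rw [if_pos (by omega), Nat.add_zero, hc1.2.1, hc2.1]
          · rw [if_neg (by omega)]
            exact congrArg c2 (by omega : a + j - a = j)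
    rw [Nat.card_congr E, Nat.card_prod]
    rw [chain_card a (W 0) (W 1) hle01 hr0]
    rw [ih g' W' (fun i hi => hpos (i + 1) (by omega)) (fun t ht => hstep (t + 1) (by omega))
      (fun t ht => ?_)]
    · rw [Finset.prod_range_succ']
      have : ∀ x ∈ Finset.range L, qFact q (g' x) = qFact q (g (x + 1)) := fun x _ => rfl
      rw [Finset.prod_congr rfl this]
      ring
    · show finrank F (W (t + 1)) = finrank F (W 1) + PS g' t
      have h1 := hrk (t + 1) (by omega)
      rw [hPS t] at h1
      omega

end


def gof (ℓ : ℕ) (lam : Fin ℓ → ℕ) : ℕ → ℕ := fun j => if h : j < ℓ then lam ⟨j, h⟩ else 0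

lemma psum_eq (ℓ : ℕ) (lam : Fin ℓ → ℕ) (t : ℕ) : psum ℓ lam t = PS (gof ℓ lam) t := rfl

lemma psum_mono (ℓ : ℕ) (lam : Fin ℓ → ℕ) : Monotone (psum ℓ lam) := PS_mono _

lemma psum_top {n ℓ : ℕ} {lam : Fin ℓ → ℕ} (hsum : ∑ i, lam i = n) : psum ℓ lam ℓ = n := by
  calc psum ℓ lam ℓ = ∑ j ∈ Finset.range ℓ, gof ℓ lam j := rfl
    _ = ∑ i : Fin ℓ, gof ℓ lam ↑i := (Fin.sum_univ_eq_sum_range _ _).symm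
    _ = ∑ i : Fin ℓ, lam i := Finset.sum_congr rfl (fun i _ => by simp [gof])
    _ = n := hsum


open Module Submodule in
theorem main (F : Type) [Field F] [Fintype F] (n : ℕ)
    (ℓ : ℕ) (lam : Fin ℓ → ℕ) (hpos : ∀ i, 0 < lam i) (hanti : Antitone lam)
    (hsum : ∑ i, lam i = n)
    (T : Module.End F (Fin n → F)) :
    (∀ V ∈ Hess F n (kLam ℓ lam) T,
      IsInvLamFlag F n ℓ lam T (fun i => V (psum ℓ lam i))) ∧
    (∀ W : Fin (ℓ + 1) → Submodule F (Fin n → F), IsInvLamFlag F n ℓ lam T W →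
      {V | V ∈ Hess F n (kLam ℓ lam) T ∧
          ∀ i : Fin (ℓ + 1), V (psum ℓ lam i) = W i}.ncard =
        ∏ i, qFact (Fintype.card F) (lam i)) := by

  classical
  have hn : psum ℓ lam ℓ = n := psum_top hsum
  constructor
  · -- Part 1
    intro V hV
    obtain ⟨⟨hV0, hVn, hVstep, hVrk⟩, hVT⟩ := hV
    have hmono := monotone_nat_of_le_succ hVstep
    have hle_n : ∀ i : Fin (ℓ + 1), psum ℓ lam ↑i ≤ n := fun i => by
      rw [← hn]; exact psum_mono ℓ lam (by omega : (↑i : ℕ) ≤ ℓ)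
    refine ⟨?_, ?_, ?_, ?_, ?_⟩
    · show V (psum ℓ lam ↑(0 : Fin (ℓ + 1))) = ⊥
      simpa [psum] using hV0
    · show V (psum ℓ lam ↑(Fin.last ℓ)) = ⊤
      rw [Fin.val_last, hn]; exact hVn
    · intro i j hij
      exact hmono (psum_mono ℓ lam (by exact_mod_cast hij : (↑i : ℕ) ≤ ↑j))
    · intro i
      exact hVrk _ (hle_n i)
    · intro i
      show Submodule.map T (V (psum ℓ lam ↑i)) ≤ V (psum ℓ lam ↑i)
      by_cases h0 : psum ℓ lam ↑i = 0
      · rw [h0, hV0]; simp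
      · have h3 := hVT (psum ℓ lam ↑i) (by omega) (hle_n i)
        have hset : (↑i : ℕ) ∈ {t | psum ℓ lam ↑i ≤ psum ℓ lam t} := (le_rfl : psum ℓ lam ↑i ≤ psum ℓ lam ↑i)
        have hsle : sInf {t | psum ℓ lam ↑i ≤ psum ℓ lam t} ≤ ↑i := Nat.sInf_le hset
        have hsmem : psum ℓ lam ↑i ≤
            psum ℓ lam (sInf {t | psum ℓ lam ↑i ≤ psum ℓ lam t}) :=
          Nat.sInf_mem (⟨↑i, hset⟩ : Set.Nonempty _)
        have hkl : kLam ℓ lam (psum ℓ lam ↑i) = psum ℓ lam ↑i :=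
          le_antisymm (psum_mono ℓ lam hsle) hsmem
        rwa [hkl] at h3
  · -- Part 2
    intro W hW
    obtain ⟨hW0, hWl, hWmono, hWrk, hWT⟩ := hW
    set q := Fintype.card F with hq
    set g : ℕ → ℕ := gof ℓ lam with hgdef
    set W' : ℕ → Submodule F (Fin n → F) :=
      fun t => if h : t ≤ ℓ then W ⟨t, Nat.lt_succ_of_le h⟩ else ⊤ with hW'def
    have hW't : ∀ t (h : t ≤ ℓ), W' t = W ⟨t, Nat.lt_succ_of_le h⟩ := fun t h => by
      rw [hW'def]; exact dif_pos h
    have hW'0 : W' 0 = ⊥ := by rw [hW't 0 (Nat.zero_le ℓ)]; exact hW0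
    have hW'0rk : Module.finrank F ↥(W' 0) = 0 := by rw [hW'0]; exact finrank_bot F _
    have hPSg : ∀ t, PS g t = psum ℓ lam t := fun t => rfl
    have hPSn : PS g ℓ = n := hn
    have hW'rk : ∀ t, t ≤ ℓ →
        Module.finrank F ↥(W' t) = Module.finrank F ↥(W' 0) + PS g t := fun t h => by
      rw [hW't t h, hW'0rk, hWrk ⟨t, Nat.lt_succ_of_le h⟩]
      simp [hPSg]
    have hset : {V | V ∈ Hess F n (kLam ℓ lam) T ∧
        ∀ i : Fin (ℓ + 1), V (psum ℓ lam ↑i) = W i} = RefS W' g ℓ := by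
      ext V
      simp only [Set.mem_setOf_eq]
      constructor
      · rintro ⟨⟨⟨h0, hn', hst, hrk⟩, _⟩, hWv⟩
        have hmono := monotone_nat_of_le_succ hst
        refine ⟨by rw [h0, hW'0], hst, fun j => ?_, fun t ht => ?_⟩
        · rw [hW'0rk, hPSn]
          rcases le_or_gt j n with h | h
          · have h1 := hrk j h; omega
          · have h2 : (⊤ : Submodule F (Fin n → F)) ≤ V j := by
              rw [← hn']; exact hmono (le_of_lt h)
            have h3 : V j = ⊤ := top_le_iff.mp h2
            rw [h3]
            have h4 : Module.finrank F ↥(⊤ : Submodule F (Fin n → F)) = n := by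
              rw [finrank_top]; exact Module.finrank_fin_fun F
            omega
        · rw [hW't t ht]
          exact hWv ⟨t, Nat.lt_succ_of_le ht⟩
      · rintro ⟨h0, hst, hrkc, hval⟩
        have hmono := monotone_nat_of_le_succ hst
        have hWv : ∀ i : Fin (ℓ + 1), V (psum ℓ lam ↑i) = W i := fun i => by
          have h1 := hval ↑i (by omega : (↑i : ℕ) ≤ ℓ)
          rw [hW't ↑i (by omega)] at h1
          exact h1
        have hVn : V n = ⊤ := by
          have := hWv (Fin.last ℓ)
          rw [Fin.val_last, hn, hWl] at this
          exact this
        refine ⟨⟨⟨by rw [h0, hW'0], hVn, hst, fun i hi => ?_⟩, fun j h1 h2 => ?_⟩, hWv⟩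
        · have := hrkc i
          rw [hW'0rk, hPSn] at this
          omega
        · have hne : ℓ ∈ {t | j ≤ psum ℓ lam t} := by
            show j ≤ psum ℓ lam ℓ; rw [hn]; exact h2
          have hsle : sInf {t | j ≤ psum ℓ lam t} ≤ ℓ := Nat.sInf_le hne
          have hsmem : j ≤ psum ℓ lam (sInf {t | j ≤ psum ℓ lam t}) :=
            Nat.sInf_mem (⟨ℓ, hne⟩ : Set.Nonempty _)
          have hVW : V (psum ℓ lam (sInf {t | j ≤ psum ℓ lam t})) =
              W ⟨sInf {t | j ≤ psum ℓ lam t}, by omega⟩ :=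
            hWv ⟨sInf {t | j ≤ psum ℓ lam t}, by omega⟩
          calc Submodule.map T (V j)
              ≤ Submodule.map T (V (psum ℓ lam (sInf {t | j ≤ psum ℓ lam t}))) :=
                Submodule.map_mono (hmono hsmem)
            _ = Submodule.map T (W ⟨sInf {t | j ≤ psum ℓ lam t}, by omega⟩) := by rw [hVW]
            _ ≤ W ⟨sInf {t | j ≤ psum ℓ lam t}, by omega⟩ := hWT _
            _ = V (psum ℓ lam (sInf {t | j ≤ psum ℓ lam t})) := hVW.symm
            _ = V (kLam ℓ lam j) := rfl
    calc {V | V ∈ Hess F n (kLam ℓ lam) T ∧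
        ∀ i : Fin (ℓ + 1), V (psum ℓ lam ↑i) = W i}.ncard
        = (RefS W' g ℓ).ncard := by rw [hset]
      _ = Nat.card ↥(RefS W' g ℓ) := (Nat.card_coe_set_eq _).symm
      _ = ∏ i ∈ Finset.range ℓ, qFact q (g i) := by
          refine refS_card ℓ g W' (fun i hi => ?_) (fun t ht => ?_) hW'rk
          · rw [hgdef]
            show 0 < gof ℓ lam i
            rw [gof, dif_pos hi]
            exact hpos _
          · rw [hW't t (by omega), hW't (t + 1) (by omega)]
            exact hWmono (by simp [Fin.mk_le_mk])
      _ = ∏ i : Fin ℓ, qFact q (g ↑i) := (Fin.prod_univ_eq_prod_range _ _).symm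
      _ = ∏ i : Fin ℓ, qFact q (lam i) := Finset.prod_congr rfl (fun i _ => by
          rw [hgdef]; show qFact q (gof ℓ lam ↑i) = _; simp [gof])

end Stmt9Aux

/-- For `m = k_λ`, the map sending a flag in `H(k_λ, T)` to its subflag at the partial
sums `α i` lands in the set of `λ`-flags of `T`-invariant subspaces, is surjective onto
it, and every fiber has exactly `[λ]_q! = ∏ i [λ i]_q!` elements. -/
theorem stmt9 (F : Type) [Field F] [Fintype F] (n : ℕ)
    (ℓ : ℕ) (lam : Fin ℓ → ℕ) (hpos : ∀ i, 0 < lam i) (hanti : Antitone lam)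
    (hsum : ∑ i, lam i = n)
    (T : Module.End F (Fin n → F)) :
    (∀ V ∈ Hess F n (kLam ℓ lam) T,
      IsInvLamFlag F n ℓ lam T (fun i => V (psum ℓ lam i))) ∧
    (∀ W : Fin (ℓ + 1) → Submodule F (Fin n → F), IsInvLamFlag F n ℓ lam T W →
      {V | V ∈ Hess F n (kLam ℓ lam) T ∧
          ∀ i : Fin (ℓ + 1), V (psum ℓ lam i) = W i}.ncard =
        ∏ i, qFact (Fintype.card F) (lam i)) :=
  Stmt9Aux.main F n ℓ lam hpos hanti hsum T
end

section
/- For each entry x of a tabloid θ, define its value as the number of entries smaller than x that appear either in the same column above x, or in the column immediately to the right of x and below x; let val(θ) be the sum of values of all entries. Define w(θ) as the number of pairs of entries i>k such that (a) i appears below k in the same column or in a column strictly to the left of the column of k, and (b) if a box immediately to the right of k is filled with entry j, then i≤j. Then w(θ) = val(θ) for every tabloid θ. -/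
open scoped Classical

/-- Butler's value statistic `val(θ)` of a tabloid: for each pair of positions
`(p, y)` in the diagram, count it when the entry at `y` is smaller than the entry at
`p` and `y` lies either in the same column as `p` and strictly above it, or in the
column immediately to the right of `p` and strictly below it.  (English notation:
"above" means smaller row index.)  Positions are pairs `⟨r, c⟩` with `c < sh r`. -/
noncomputable def valStat (L : ℕ) (sh : Fin L → ℕ) (θ : (r : Fin L) → Fin (sh r) → ℕ) : ℕ :=
  (Finset.univ.filter fun pq : (Σ r : Fin L, Fin (sh r)) × (Σ r : Fin L, Fin (sh r)) =>
    θ pq.2.1 pq.2.2 < θ pq.1.1 pq.1.2 ∧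
      (((pq.2.2 : ℕ) = (pq.1.2 : ℕ) ∧ (pq.2.1 : ℕ) < (pq.1.1 : ℕ)) ∨
        ((pq.2.2 : ℕ) = (pq.1.2 : ℕ) + 1 ∧ (pq.1.1 : ℕ) < (pq.2.1 : ℕ)))).card

/-- The statistic `w(θ)`: the number of pairs of positions `(pᵢ, pₖ)` whose entries
satisfy `i > k`, such that (a) `pᵢ` is below `pₖ` in the same column or in a column
strictly to the left of that of `pₖ`, and (b) if the box immediately to the right of
`pₖ` exists and holds entry `j`, then `i ≤ j`. -/
noncomputable def wStat (L : ℕ) (sh : Fin L → ℕ) (θ : (r : Fin L) → Fin (sh r) → ℕ) : ℕ :=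
  (Finset.univ.filter fun pq : (Σ r : Fin L, Fin (sh r)) × (Σ r : Fin L, Fin (sh r)) =>
    θ pq.2.1 pq.2.2 < θ pq.1.1 pq.1.2 ∧
      (((pq.1.2 : ℕ) = (pq.2.2 : ℕ) ∧ (pq.2.1 : ℕ) < (pq.1.1 : ℕ)) ∨
        (pq.1.2 : ℕ) < (pq.2.2 : ℕ)) ∧
      (∀ h : (pq.2.2 : ℕ) + 1 < sh pq.2.1,
        θ pq.1.1 pq.1.2 ≤ θ pq.2.1 ⟨(pq.2.2 : ℕ) + 1, h⟩)).card

/-- The position of the rightmost entry `< i` in a row (junk value if none). -/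
noncomputable def rowMax {n : ℕ} (h0 : 0 < n) (f : Fin n → ℕ) (i : ℕ) : Fin n :=
  if hne : (Finset.univ.filter fun d : Fin n => f d < i).Nonempty
  then (Finset.univ.filter fun d : Fin n => f d < i).max' hne else ⟨0, h0⟩

lemma rowMax_spec {n : ℕ} (h0 : 0 < n) (f : Fin n → ℕ) (i : ℕ)
    (d : Fin n) (hd : f d < i) :
    f (rowMax h0 f i) < i ∧ d ≤ rowMax h0 f i ∧
      ∀ h : (rowMax h0 f i : ℕ) + 1 < n, i ≤ f ⟨(rowMax h0 f i : ℕ) + 1, h⟩ := by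
  have hne : (Finset.univ.filter fun d : Fin n => f d < i).Nonempty :=
    ⟨d, by simp [hd]⟩
  rw [rowMax, dif_pos hne]
  set T := Finset.univ.filter fun d : Fin n => f d < i with hT
  have hM : f (T.max' hne) < i := by
    have := T.max'_mem hne
    simpa [hT] using this
  refine ⟨hM, T.le_max' d (by simp [hT, hd]), ?_⟩
  intro h
  by_contra hcon
  push_neg at hcon
  have : (⟨(T.max' hne : ℕ) + 1, h⟩ : Fin n) ≤ T.max' hne :=
    T.le_max' _ (by simp [hT, hcon])
  simp [Fin.le_def] at this

lemma rowMax_eq {n : ℕ} (h0 : 0 < n) (f : Fin n → ℕ) (hf : Monotone f) (i : ℕ)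
    (m : Fin n) (hm : f m < i)
    (hmax : ∀ h : (m : ℕ) + 1 < n, i ≤ f ⟨(m : ℕ) + 1, h⟩) : rowMax h0 f i = m := by
  obtain ⟨h1, h2, h3⟩ := rowMax_spec h0 f i m hm
  refine le_antisymm ?_ h2
  by_contra hcon
  push_neg at hcon
  have hbox : (m : ℕ) + 1 < n := lt_of_le_of_lt hcon (rowMax h0 f i).isLt
  have := hmax hbox
  have hmono : f ⟨(m : ℕ) + 1, hbox⟩ ≤ f (rowMax h0 f i) :=
    hf (by simpa [Fin.le_def] using hcon)
  omega

lemma fiber_card {α β : Type*} [Fintype α] [Fintype β] (P : α × β → Prop)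
    [inst : DecidablePred P] :
    (Finset.univ.filter P).card
      = ∑ a : α, (@Finset.filter β (fun b => P (a, b)) (fun b => inst (a, b))
          Finset.univ).card := by
  classical
  rw [Finset.card_eq_sum_card_fiberwise (f := Prod.fst) (t := Finset.univ)
    (fun _ _ => Finset.mem_univ _)]
  refine Finset.sum_congr rfl fun a _ => ?_
  refine Finset.card_nbij' Prod.snd (fun b => (a, b)) ?_ ?_ ?_ ?_
  · intro x hx
    simp only [Finset.coe_filter, Set.mem_setOf_eq, Finset.mem_coe, Finset.mem_filter, Finset.mem_univ, true_and] at hx ⊢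
    obtain ⟨h1, h2⟩ := hx
    rwa [← h2, Prod.mk.eta]
  · intro b hb
    simp only [Finset.coe_filter, Set.mem_setOf_eq, Finset.mem_coe, Finset.mem_filter, Finset.mem_univ, true_and] at hb ⊢
    exact ⟨hb, trivial⟩
  · intro x hx
    simp only [Finset.coe_filter, Set.mem_setOf_eq, Finset.mem_coe, Finset.mem_filter, Finset.mem_univ, true_and] at hx
    rw [← hx.2]
  · intro b _
    rfl

/-- For every tabloid `θ` (a filling of a partition shape with weakly increasing
rows), the statistic `w(θ)` equals Butler's value statistic `val(θ)`. -/
theorem stmt15 (L : ℕ) (sh : Fin L → ℕ) (hsh : Antitone sh) (hpos : ∀ r, 0 < sh r)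
    (θ : (r : Fin L) → Fin (sh r) → ℕ) (hrows : ∀ r, Monotone (θ r)) :
    wStat L sh θ = valStat L sh θ := by
  unfold wStat valStat
  rw [fiber_card, fiber_card]
  refine Finset.sum_congr rfl fun p _ => ?_
  obtain ⟨pr, pc⟩ := p
  refine Finset.card_nbij'
    (fun y => if h : (pc : ℕ) < (y.2 : ℕ) then
        (if (y.1 : ℕ) < (pr : ℕ) then
          ⟨y.1, ⟨(pc : ℕ), lt_trans h y.2.isLt⟩⟩
         else ⟨y.1, ⟨(pc : ℕ) + 1, lt_of_le_of_lt (Nat.succ_le_of_lt h) y.2.isLt⟩⟩)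
      else y)
    (fun z => if ((z.2 : ℕ) = (pc : ℕ) ∧
          ∀ h : (z.2 : ℕ) + 1 < sh z.1, θ pr pc ≤ θ z.1 ⟨(z.2 : ℕ) + 1, h⟩)
      then z else ⟨z.1, rowMax (hpos z.1) (θ z.1) (θ pr pc)⟩)
    ?_ ?_ ?_ ?_
  · -- f maps into valStat fiber
    rintro ⟨yr, yc⟩ hy
    simp only [Finset.coe_filter, Set.mem_setOf_eq, Finset.mem_coe, Finset.mem_filter, Finset.mem_univ, true_and] at hy ⊢
    obtain ⟨h1, h2, h3⟩ := hy
    by_cases hlt : (pc : ℕ) < (yc : ℕ)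
    · have hne : (yr : ℕ) ≠ (pr : ℕ) := by
        intro hr
        have heq : yr = pr := Fin.ext hr
        subst heq
        have hmono : θ yr pc ≤ θ yr yc := hrows yr (le_of_lt hlt)
        omega
      rw [dif_pos hlt]
      by_cases hrlt : (yr : ℕ) < (pr : ℕ)
      · rw [if_pos hrlt]
        refine ⟨?_, Or.inl ⟨rfl, hrlt⟩⟩
        refine lt_of_le_of_lt (hrows yr ?_) h1
        exact le_of_lt hlt
      · rw [if_neg hrlt]
        refine ⟨?_, Or.inr ⟨rfl, (by omega : (pr : ℕ) < (yr : ℕ))⟩⟩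
        refine lt_of_le_of_lt (hrows yr ?_) h1
        exact Nat.succ_le_of_lt hlt
    · rw [dif_neg hlt]
      have hq : (yc : ℕ) = (pc : ℕ) := by
        rcases h2 with ⟨h, _⟩ | h
        · omega
        · omega
      rcases h2 with ⟨_, hr⟩ | h
      · exact ⟨h1, Or.inl ⟨hq, hr⟩⟩
      · omega
  · -- g maps into wStat fiber
    rintro ⟨zr, zc⟩ hz
    simp only [Finset.coe_filter, Set.mem_setOf_eq, Finset.mem_coe, Finset.mem_filter, Finset.mem_univ, true_and] at hz ⊢
    obtain ⟨h1, h2⟩ := hz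
    by_cases hcond : ((zc : ℕ) = (pc : ℕ) ∧
        ∀ h : (zc : ℕ) + 1 < sh zr, θ pr pc ≤ θ zr ⟨(zc : ℕ) + 1, h⟩)
    · rw [if_pos hcond]
      refine ⟨h1, Or.inl ⟨hcond.1.symm, ?_⟩, hcond.2⟩
      rcases h2 with ⟨_, h⟩ | ⟨hq, _⟩
      · exact h
      · omega
    · rw [if_neg hcond]
      have hkey : ∃ hb : (pc : ℕ) + 1 < sh zr, θ zr ⟨(pc : ℕ) + 1, hb⟩ < θ pr pc := by
        rcases h2 with ⟨hq, hr⟩ | ⟨hq, hr⟩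
        · push_neg at hcond
          obtain ⟨hb, hv⟩ := hcond hq
          have hb' : (pc : ℕ) + 1 < sh zr := by omega
          refine ⟨hb', ?_⟩
          have heq : (⟨(zc : ℕ) + 1, hb⟩ : Fin (sh zr)) = ⟨(pc : ℕ) + 1, hb'⟩ :=
            Fin.ext (by simp [hq])
          rwa [heq] at hv
        · have hb' : (pc : ℕ) + 1 < sh zr := by have := zc.isLt; omega
          refine ⟨hb', ?_⟩
          have heq : (⟨(pc : ℕ) + 1, hb'⟩ : Fin (sh zr)) = zc := Fin.ext (by simp [hq])
          rwa [heq]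
      obtain ⟨hb, hv⟩ := hkey
      obtain ⟨m1, m2, m3⟩ := rowMax_spec (hpos zr) (θ zr) (θ pr pc) ⟨(pc : ℕ) + 1, hb⟩ hv
      refine ⟨m1, Or.inr ?_, m3⟩
      show (pc : ℕ) < (rowMax (hpos zr) (θ zr) (θ pr pc) : ℕ)
      have : (pc : ℕ) + 1 ≤ (rowMax (hpos zr) (θ zr) (θ pr pc) : ℕ) := m2
      omega
  · -- left inverse
    rintro ⟨yr, yc⟩ hy
    simp only [Finset.coe_filter, Set.mem_setOf_eq, Finset.mem_coe, Finset.mem_filter, Finset.mem_univ, true_and] at hy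
    obtain ⟨h1, h2, h3⟩ := hy
    dsimp only at h1 h2 h3 ⊢
    by_cases hlt : (pc : ℕ) < (yc : ℕ)
    · have hM : rowMax (hpos yr) (θ yr) (θ pr pc) = yc :=
        rowMax_eq (hpos yr) (θ yr) (hrows yr) _ yc h1 h3
      rw [dif_pos hlt]
      by_cases hrlt : (yr : ℕ) < (pr : ℕ)
      · rw [if_pos hrlt]
        dsimp only
        have hbox : (pc : ℕ) + 1 < sh yr :=
          lt_of_le_of_lt (Nat.succ_le_of_lt hlt) yc.isLt
        have hnB : ¬ ((pc : ℕ) = (pc : ℕ) ∧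
            ∀ h : (pc : ℕ) + 1 < sh yr, θ pr pc ≤ θ yr ⟨(pc : ℕ) + 1, h⟩) := by
          rintro ⟨-, hB⟩
          have hle := hB hbox
          have hmono : θ yr ⟨(pc : ℕ) + 1, hbox⟩ ≤ θ yr yc :=
            hrows yr (Nat.succ_le_of_lt hlt)
          omega
        rw [if_neg hnB, hM]
      · rw [if_neg hrlt]
        dsimp only
        rw [if_neg (fun hc => by omega : ¬ ((pc : ℕ) + 1 = (pc : ℕ) ∧
            ∀ h : (pc : ℕ) + 1 + 1 < sh yr, θ pr pc ≤ θ yr ⟨(pc : ℕ) + 1 + 1, h⟩)), hM]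
    · rw [dif_neg hlt]
      have hq : (yc : ℕ) = (pc : ℕ) := by
        rcases h2 with ⟨h, _⟩ | h
        · omega
        · omega
      rw [if_pos ⟨hq, h3⟩]
  · -- right inverse
    rintro ⟨zr, zc⟩ hz
    simp only [Finset.coe_filter, Set.mem_setOf_eq, Finset.mem_coe, Finset.mem_filter, Finset.mem_univ, true_and] at hz
    obtain ⟨h1, h2⟩ := hz
    dsimp only at h1 h2 ⊢
    by_cases hcond : ((zc : ℕ) = (pc : ℕ) ∧
        ∀ h : (zc : ℕ) + 1 < sh zr, θ pr pc ≤ θ zr ⟨(zc : ℕ) + 1, h⟩)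
    · rw [if_pos hcond]
      dsimp only
      rw [dif_neg (by omega : ¬ (pc : ℕ) < (zc : ℕ))]
    · rw [if_neg hcond]
      dsimp only
      have hkey : ∃ hb : (pc : ℕ) + 1 < sh zr, θ zr ⟨(pc : ℕ) + 1, hb⟩ < θ pr pc := by
        rcases h2 with ⟨hq, hr⟩ | ⟨hq, hr⟩
        · push_neg at hcond
          obtain ⟨hb, hv⟩ := hcond hq
          have hb' : (pc : ℕ) + 1 < sh zr := by omega
          refine ⟨hb', ?_⟩
          have heq : (⟨(zc : ℕ) + 1, hb⟩ : Fin (sh zr)) = ⟨(pc : ℕ) + 1, hb'⟩ :=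
            Fin.ext (by simp [hq])
          rwa [heq] at hv
        · have hb' : (pc : ℕ) + 1 < sh zr := by have := zc.isLt; omega
          refine ⟨hb', ?_⟩
          have heq : (⟨(pc : ℕ) + 1, hb'⟩ : Fin (sh zr)) = zc := Fin.ext (by simp [hq])
          rwa [heq]
      obtain ⟨hb, hv⟩ := hkey
      obtain ⟨m1, m2, m3⟩ := rowMax_spec (hpos zr) (θ zr) (θ pr pc) ⟨(pc : ℕ) + 1, hb⟩ hv
      have hMgt : (pc : ℕ) < (rowMax (hpos zr) (θ zr) (θ pr pc) : ℕ) := by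
        have : (pc : ℕ) + 1 ≤ (rowMax (hpos zr) (θ zr) (θ pr pc) : ℕ) := m2
        omega
      rw [dif_pos hMgt]
      rcases h2 with ⟨hq, hr⟩ | ⟨hq, hr⟩
      · rw [if_pos hr]
        exact congrArg (Sigma.mk zr) (Fin.ext (by simp [hq]))
      · rw [if_neg (by omega : ¬ (zr : ℕ) < (pr : ℕ))]
        exact congrArg (Sigma.mk zr) (Fin.ext (by simp [hq]))
end
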